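/- arXiv:0705.2734 — 6 statements merged into one kernel-verified Lean document; each statement's English description precedes it below -/
import Mathlib

section
/- For all n ≥ 2, the generating polynomials D_n(x) = Σ_k D(n,k)x^k satisfy D_n(x) = x·(D_{n-1}'(x) + (n-1)·D_{n-2}(x)). -/
open Finset

variable {α : Type*} [DecidableEq α] {β : Type*} [DecidableEq β]

/-- The finset of partitions of `s` into `k` parts, each of size at least 2. -/
noncomputable def good (s : Finset α) (k : ℕ) : Finset (Finpartition s) := by
  classical exact Finset.univ.filter (fun P => P.parts.card = k ∧ ∀ b ∈ P.parts, 2 ≤ b.card)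

lemma mem_good {s : Finset α} {k : ℕ} {P : Finpartition s} :
    P ∈ good s k ↔ P.parts.card = k ∧ ∀ b ∈ P.parts, 2 ≤ b.card := by
  classical simp [good]

/-- Pushforward of a finpartition along a map injective on `s`. -/
def Finpartition.mapInj {s : Finset α} (P : Finpartition s) (f : α → β)
    (hf : Set.InjOn f s) : Finpartition (s.image f) where
  parts := P.parts.image (Finset.image f)
  supIndep := by
    rw [Finset.supIndep_iff_pairwiseDisjoint]
    rintro _ hb _ hc hbc
    simp only [coe_image, Set.mem_image, mem_coe] at hb hc
    obtain ⟨b, hb, rfl⟩ := hb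
    obtain ⟨c, hc, rfl⟩ := hc
    have hbc' : b ≠ c := by rintro rfl; exact hbc rfl
    have hd := P.disjoint hb hc hbc'
    simp only [Function.onFun, id] at hd ⊢
    rw [Finset.disjoint_left] at hd ⊢
    rintro x hx hx'
    simp only [Finset.mem_image] at hx hx'
    obtain ⟨u, hu, rfl⟩ := hx
    obtain ⟨v, hv, hvu⟩ := hx'
    have : v = u := hf (P.le hc hv) (P.le hb hu) hvu
    exact hd hu (this ▸ hv)
  sup_parts := by
    rw [Finset.sup_image]
    have h1 : P.parts.sup (id ∘ Finset.image f) = (P.parts.sup id).image f := by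
      simp only [Function.comp_def, id]
      induction P.parts using Finset.induction with
      | empty => simp
      | insert _ _ _ ih => simp [Finset.sup_insert, Finset.image_union, ih]
    rw [h1, P.sup_parts]
  bot_notMem := by
    simp only [Finset.bot_eq_empty, Finset.mem_image]
    rintro ⟨b, hb, hb'⟩
    exact P.bot_notMem (by rwa [Finset.image_eq_empty.1 hb'] at hb)

lemma Finpartition.mapInj_parts {s : Finset α} (P : Finpartition s) (f : α → β)
    (hf : Set.InjOn f s) : (P.mapInj f hf).parts = P.parts.image (Finset.image f) := rfl



lemma image_inj_of_subset {s : Finset α} {f : α → β} (hf : Set.InjOn f s)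
    {b c : Finset α} (hb : b ⊆ s) (hc : c ⊆ s) (h : b.image f = c.image f) : b = c := by
  ext x
  constructor
  · intro hx
    have : f x ∈ c.image f := h ▸ Finset.mem_image_of_mem f hx
    obtain ⟨y, hy, hyx⟩ := Finset.mem_image.1 this
    rwa [← hf (hc hy) (hb hx) hyx]
  · intro hx
    have : f x ∈ b.image f := h.symm ▸ Finset.mem_image_of_mem f hx
    obtain ⟨y, hy, hyx⟩ := Finset.mem_image.1 this
    rwa [← hf (hb hy) (hc hx) hyx]

lemma good_empty (k : ℕ) : (good (∅ : Finset α) k).card = if k = 0 then 1 else 0 := by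
  classical
  have huniq : ∀ P : Finpartition (∅ : Finset α), P = Finpartition.empty _ := by
    intro P
    ext1
    rw [Finpartition.parts_eq_empty_iff.2 rfl]
    rfl
  have hu : (Finset.univ : Finset (Finpartition (∅ : Finset α))) = {Finpartition.empty _} := by
    apply Finset.eq_singleton_iff_unique_mem.2
    exact ⟨Finset.mem_univ _, fun P _ => huniq P⟩
  rw [good, hu]
  by_cases hk : k = 0
  · simp [hk, Finset.filter_singleton, Finpartition.empty]
  · simp only [Finset.filter_singleton, Finpartition.empty]
    rw [if_neg (by simp only [Finset.card_empty]; exact fun h => hk h.1.symm)]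
    simp [hk]

/-- `mapInj` is injective. -/
lemma mapInj_injective {s : Finset α} (f : α → β) (hf : Set.InjOn f s) :
    Function.Injective (fun P : Finpartition s => P.mapInj f hf) := by
  intro P Q h
  have h' : P.parts.image (Finset.image f) = Q.parts.image (Finset.image f) :=
    congrArg Finpartition.parts h
  have key : ∀ (R T : Finpartition s), R.parts.image (Finset.image f) ⊆
      T.parts.image (Finset.image f) → R.parts ⊆ T.parts := by
    intro R T hsub b hb
    have : b.image f ∈ T.parts.image (Finset.image f) :=
      hsub (Finset.mem_image_of_mem _ hb)
    obtain ⟨c, hc, hcb⟩ := Finset.mem_image.1 this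
    have : c = b := image_inj_of_subset hf (T.le hc) (R.le hb) hcb
    exact this ▸ hc
  ext1
  exact Finset.Subset.antisymm (key P Q h'.le) (key Q P h'.ge)

lemma mapInj_mem_good {s : Finset α} {k : ℕ} {P : Finpartition s} (f : α → β)
    (hf : Set.InjOn f s) (hP : P ∈ good s k) : P.mapInj f hf ∈ good (s.image f) k := by
  obtain ⟨hcard, hsize⟩ := mem_good.1 hP
  rw [mem_good, Finpartition.mapInj_parts]
  constructor
  · rw [Finset.card_image_of_injOn, hcard]
    intro b hb c hc
    exact image_inj_of_subset hf (P.le hb) (P.le hc)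
  · intro b hb
    obtain ⟨c, hc, rfl⟩ := Finset.mem_image.1 hb
    rw [Finset.card_image_of_injOn (hf.mono (by exact_mod_cast P.le hc))]
    exact hsize c hc

lemma card_good_le (u : Finset α) (v : Finset β) (huv : u.card = v.card) (k : ℕ) :
    (good u k).card ≤ (good v k).card := by
  classical
  rcases u.eq_empty_or_nonempty with rfl | hne
  · have hv : v = ∅ := by
      rw [← Finset.card_eq_zero, ← huv, Finset.card_empty]
    subst hv
    simp [good_empty]
  · have hvne : v.Nonempty := by
      rw [← Finset.card_pos, ← huv, Finset.card_pos]; exact hne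
    obtain ⟨y0, hy0⟩ := hvne
    obtain ⟨e⟩ : Nonempty ((u : Finset α) ≃ (v : Finset β)) :=
      ⟨Finset.equivOfCardEq huv⟩
    set f : α → β := fun x => if hx : x ∈ u then (e ⟨x, hx⟩ : β) else y0 with hfdef
    have hinj : Set.InjOn f u := by
      intro x hx y hy hxy
      have hx' : x ∈ u := hx
      have hy' : y ∈ u := hy
      rw [hfdef] at hxy
      simp only at hxy
      rw [dif_pos hx', dif_pos hy'] at hxy
      have := e.injective (Subtype.ext hxy)
      exact congrArg Subtype.val this
    have himg : u.image f = v := by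
      apply Finset.eq_of_subset_of_card_le
      · intro y hy
        obtain ⟨x, hx, rfl⟩ := Finset.mem_image.1 hy
        rw [hfdef]
        simp only
        rw [dif_pos hx]
        exact (e ⟨x, hx⟩).2
      · rw [Finset.card_image_of_injOn hinj, huv]
    calc (good u k).card ≤ (good (u.image f) k).card := by
          apply Finset.card_le_card_of_injOn (fun P => P.mapInj f hinj)
            (fun P hP => mapInj_mem_good f hinj hP)
          intro P _ Q _ hPQ
          exact mapInj_injective f hinj hPQ
      _ = (good v k).card := by rw [himg]

/-- The number of good partitions only depends
    on the cardinality. -/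
lemma card_good_eq {s : Finset α} {t : Finset β} (h : s.card = t.card) (k : ℕ) :
    (good s k).card = (good t k).card :=
  le_antisymm (card_good_le s t h k) (card_good_le t s h.symm k)

section Avoid
variable {s t : Finset α} {a : α} {b : Finset α}

/-- Parts of `avoid b` when `b` is itself a part. -/
lemma avoid_parts_of_mem (Q : Finpartition t) (hb : b ∈ Q.parts) :
    (Q.avoid b).parts = Q.parts.erase b := by
  ext c
  rw [Finpartition.mem_avoid, Finset.mem_erase]
  constructor
  · rintro ⟨d, hd, hdb, rfl⟩
    rcases eq_or_ne d b with rfl | hne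
    · exact absurd le_rfl hdb
    · have hdisj : Disjoint d b := Q.disjoint hd hb hne
      rw [Finset.sdiff_eq_self_of_disjoint hdisj]
      exact ⟨hne, hd⟩
  · rintro ⟨hne, hc⟩
    have hdisj : Disjoint c b := Q.disjoint hc hb hne
    refine ⟨c, hc, fun hle => ?_, Finset.sdiff_eq_self_of_disjoint hdisj⟩
    · obtain ⟨x, hx⟩ := Q.nonempty_of_mem_parts hc
      exact (Finset.disjoint_left.1 hdisj) hx (hle hx)

/-- Parts of `avoid {a}` when `a`'s part has at least two elements. -/
lemma avoid_singleton_parts (P : Finpartition s) (ha : a ∈ s) (h2 : 2 ≤ (P.part a).card) :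
    (P.avoid {a}).parts = insert ((P.part a).erase a) (P.parts.erase (P.part a)) := by
  have hpmem := (P.part_mem.2 ha)
  have hamem := P.mem_part ha
  ext c
  rw [Finpartition.mem_avoid, Finset.mem_insert, Finset.mem_erase]
  constructor
  · rintro ⟨d, hd, hda, rfl⟩
    rcases eq_or_ne d (P.part a) with rfl | hne
    · left; rw [← Finset.erase_eq]
    · right
      have had : a ∉ d := fun had => hne (P.eq_of_mem_parts hd hpmem had hamem ▸ rfl)
      rw [Finset.sdiff_singleton_eq_erase, Finset.erase_eq_of_notMem had]
      exact ⟨hne, hd⟩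
  · rintro (rfl | ⟨hne, hc⟩)
    · refine ⟨P.part a, hpmem, fun hle => ?_, by rw [← Finset.erase_eq]⟩
      have : (P.part a).card ≤ 1 := le_trans (Finset.card_le_card hle) (by simp)
      omega
    · have hac : a ∉ c := fun hac => hne (P.eq_of_mem_parts hc hpmem hac hamem ▸ rfl)
      exact ⟨c, hc, fun hle => by
        obtain ⟨x, hx⟩ := P.nonempty_of_mem_parts hc
        have := hle hx
        rw [Finset.mem_singleton] at this
        exact hac (this ▸ hx), by rw [Finset.sdiff_singleton_eq_erase,
          Finset.erase_eq_of_notMem hac]⟩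

lemma erase_part_not_mem (P : Finpartition s) (ha : a ∈ s) (h2 : 2 ≤ (P.part a).card) :
    (P.part a).erase a ∉ P.parts.erase (P.part a) := by
  intro h
  obtain ⟨hne, hmem⟩ := Finset.mem_erase.1 h
  have hnonempty : ((P.part a).erase a).Nonempty := by
    rw [← Finset.card_pos, Finset.card_erase_of_mem (P.mem_part ha)]; omega
  obtain ⟨x, hx⟩ := hnonempty
  have hx' : x ∈ P.part a := Finset.mem_of_mem_erase hx
  exact hne (P.eq_of_mem_parts hmem ((P.part_mem.2 ha)) hx hx')

end Avoid

section AddTo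
variable {t : Finset α} {a : α} {b : Finset α}

/-- Add a new element `a` to the part `b` of a finpartition. -/
def Finpartition.addTo (Q : Finpartition t) (b : Finset α) (hb : b ∈ Q.parts)
    (a : α) (ha : a ∉ t) : Finpartition (insert a t) :=
  (Q.avoid b).extend (b := insert a b)
    (by simp [Finset.bot_eq_empty, Finset.insert_ne_empty])
    (by
      rw [Finset.disjoint_insert_right]
      exact ⟨fun h => ha (Finset.mem_sdiff.1 h).1, Finset.sdiff_disjoint⟩)
    (by
      show t \ b ∪ insert a b = insert a t
      rw [Finset.union_insert, Finset.sdiff_union_of_subset (Q.le hb)])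

lemma Finpartition.addTo_parts (Q : Finpartition t) (hb : b ∈ Q.parts) (ha : a ∉ t) :
    (Q.addTo b hb a ha).parts = insert (insert a b) (Q.parts.erase b) := by
  rw [Finpartition.addTo, Finpartition.extend_parts, avoid_parts_of_mem Q hb]

lemma insert_not_mem_erase (Q : Finpartition t) (ha : a ∉ t) (b c : Finset α) :
    insert a b ∉ Q.parts.erase c := by
  intro h
  exact ha (Q.le (Finset.mem_of_mem_erase h) (Finset.mem_insert_self a b))

end AddTo

section Main
variable {s : Finset α} {a : α}

lemma card_good_big (ha : a ∈ s) (k : ℕ) :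
    ((good s k).filter (fun P => 3 ≤ (P.part a).card)).card
      = k * (good (s.erase a) k).card := by
  classical
  have hstep : ((good s k).filter (fun P => 3 ≤ (P.part a).card)).card
      = ((good (s.erase a) k).sigma (fun Q => Q.parts)).card := by
    refine Finset.card_bij'
      (fun P _ => ⟨(P.avoid {a}).copy (Finset.erase_eq s a).symm, (P.part a).erase a⟩)
      (fun x hx => (x.1.addTo x.2 (Finset.mem_sigma.1 hx).2 a
        (Finset.notMem_erase a s)).copy (Finset.insert_erase ha)) ?_ ?_ ?_ ?_
    · -- hi
      intro P hP
      obtain ⟨hPg, h3⟩ := Finset.mem_filter.1 hP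
      obtain ⟨hk, hsz⟩ := mem_good.1 hPg
      have h2 : 2 ≤ (P.part a).card := hsz _ ((P.part_mem.2 ha))
      have hparts : ((P.avoid {a}).copy (Finset.erase_eq s a).symm).parts
          = insert ((P.part a).erase a) (P.parts.erase (P.part a)) := by
        rw [Finpartition.copy_parts, avoid_singleton_parts P ha h2]
      rw [Finset.mem_sigma]
      constructor
      · rw [mem_good, hparts]
        have hk1 : 1 ≤ k := by
          rw [← hk]
          exact Finset.card_pos.2 ⟨_, (P.part_mem.2 ha)⟩
        refine ⟨?_, ?_⟩
        · rw [Finset.card_insert_of_notMem (erase_part_not_mem P ha h2),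
            Finset.card_erase_of_mem ((P.part_mem.2 ha)), hk]
          omega
        · intro c hc
          rcases Finset.mem_insert.1 hc with rfl | hc'
          · rw [Finset.card_erase_of_mem (P.mem_part ha)]
            omega
          · exact hsz c (Finset.mem_of_mem_erase hc')
      · rw [hparts]
        exact Finset.mem_insert_self _ _
    · -- hj
      intro x hx
      obtain ⟨hQg, hb⟩ := Finset.mem_sigma.1 hx
      obtain ⟨hk, hsz⟩ := mem_good.1 hQg
      have hanotb : a ∉ x.2 := fun h => Finset.notMem_erase a s (x.1.le hb h)
      have hparts : ((x.1.addTo x.2 (Finset.mem_sigma.1 hx).2 a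
          (Finset.notMem_erase a s)).copy (Finset.insert_erase ha)).parts
          = insert (insert a x.2) (x.1.parts.erase x.2) := by
        rw [Finpartition.copy_parts, Finpartition.addTo_parts]
      have hmemins : insert a x.2 ∉ x.1.parts.erase x.2 :=
        insert_not_mem_erase x.1 (Finset.notMem_erase a s) _ _
      have hk1 : 1 ≤ k := by
        rw [← hk]
        exact Finset.card_pos.2 ⟨_, hb⟩
      have hparta : (((x.1.addTo x.2 (Finset.mem_sigma.1 hx).2 a
          (Finset.notMem_erase a s)).copy (Finset.insert_erase ha))).part a
          = insert a x.2 := by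
        apply Finpartition.part_eq_of_mem
        · rw [hparts]; exact Finset.mem_insert_self _ _
        · exact Finset.mem_insert_self _ _
      rw [Finset.mem_filter]
      constructor
      · rw [mem_good, hparts]
        refine ⟨?_, ?_⟩
        · rw [Finset.card_insert_of_notMem hmemins,
            Finset.card_erase_of_mem hb, hk]
          omega
        · intro c hc
          rcases Finset.mem_insert.1 hc with rfl | hc'
          · rw [Finset.card_insert_of_notMem hanotb]
            have := hsz _ hb
            omega
          · exact hsz c (Finset.mem_of_mem_erase hc')
      · rw [hparta, Finset.card_insert_of_notMem hanotb]
        have := hsz _ hb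
        omega
    · -- left_inv
      intro P hP
      obtain ⟨hPg, h3⟩ := Finset.mem_filter.1 hP
      obtain ⟨hk, hsz⟩ := mem_good.1 hPg
      have h2 : 2 ≤ (P.part a).card := hsz _ ((P.part_mem.2 ha))
      ext1
      rw [Finpartition.copy_parts, Finpartition.addTo_parts,
        Finpartition.copy_parts, avoid_singleton_parts P ha h2,
        Finset.insert_erase (P.mem_part ha),
        Finset.erase_insert (erase_part_not_mem P ha h2),
        Finset.insert_erase ((P.part_mem.2 ha))]
    · -- right_inv
      intro x hx
      obtain ⟨Q, b⟩ := x
      obtain ⟨hQg, hb⟩ := Finset.mem_sigma.1 hx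
      obtain ⟨hk, hsz⟩ := mem_good.1 hQg
      have hanotb : a ∉ b := fun h => Finset.notMem_erase a s (Q.le hb h)
      set P' := (Q.addTo b (Finset.mem_sigma.1 hx).2 a
        (Finset.notMem_erase a s)).copy (Finset.insert_erase ha) with hP'
      have hparts : P'.parts = insert (insert a b) (Q.parts.erase b) := by
        rw [hP', Finpartition.copy_parts, Finpartition.addTo_parts]
      have hparta : P'.part a = insert a b := by
        apply Finpartition.part_eq_of_mem
        · rw [hparts]; exact Finset.mem_insert_self _ _
        · exact Finset.mem_insert_self _ _
      have h2' : 2 ≤ (P'.part a).card := by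
        rw [hparta, Finset.card_insert_of_notMem hanotb]
        have h1 : 1 ≤ b.card := Finset.card_pos.2 (Q.nonempty_of_mem_parts hb)
        omega
      have hsnd : (P'.part a).erase a = b := by
        rw [hparta, Finset.erase_insert hanotb]
      have hfst : (P'.avoid {a}).copy (Finset.erase_eq s a).symm = Q := by
        ext1
        rw [Finpartition.copy_parts, avoid_singleton_parts P' ha h2', hsnd, hparta, hparts,
          Finset.erase_insert (insert_not_mem_erase Q (Finset.notMem_erase a s) _ _),
          Finset.insert_erase hb]
      exact Sigma.ext hfst (heq_of_eq hsnd)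
  rw [hstep, Finset.card_sigma,
    Finset.sum_congr rfl (fun Q hQ => (mem_good.1 hQ).1), Finset.sum_const,
    smul_eq_mul, mul_comm]

end Main

section PartB
variable {s : Finset α} {a : α}

noncomputable def uniqueElt {b : Finset α} (h : b.card = 1) : α :=
  (Finset.card_eq_one.1 h).choose

lemma uniqueElt_spec {b : Finset α} (h : b.card = 1) : b = {uniqueElt h} :=
  (Finset.card_eq_one.1 h).choose_spec

lemma uniqueElt_mem {b : Finset α} (h : b.card = 1) : uniqueElt h ∈ b := by
  have := Finset.mem_singleton_self (uniqueElt h)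
  rwa [← uniqueElt_spec h] at this

lemma uniqueElt_eq {b : Finset α} (h : b.card = 1) {x : α} (hx : b = {x}) :
    uniqueElt h = x := by
  have := (uniqueElt_spec h).symm.trans hx
  exact Finset.singleton_injective this

lemma Finpartition.heq_of_parts {t1 t2 : Finset α} (h : t1 = t2)
    {P : Finpartition t1} {Q : Finpartition t2} (hp : P.parts = Q.parts) : HEq P Q := by
  subst h
  exact heq_of_eq (Finpartition.ext hp)

lemma erase_part_card_one {k : ℕ} {P : Finpartition s} (ha : a ∈ s)
    (hP : P ∈ (good s k).filter (fun P => ¬ 3 ≤ (P.part a).card)) :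
    ((P.part a).erase a).card = 1 := by
  obtain ⟨hPg, h3⟩ := Finset.mem_filter.1 hP
  obtain ⟨_, hsz⟩ := mem_good.1 hPg
  have h2 : 2 ≤ (P.part a).card := hsz _ ((P.part_mem.2 ha))
  rw [Finset.card_erase_of_mem (P.mem_part ha)]
  omega

set_option maxHeartbeats 1000000 in
lemma part_eq_pair {k : ℕ} {P : Finpartition s} (ha : a ∈ s)
    (hP : P ∈ (good s k).filter (fun P => ¬ 3 ≤ (P.part a).card)) :
    P.part a = {a, uniqueElt (erase_part_card_one ha hP)} := by
  have hspec := uniqueElt_spec (erase_part_card_one ha hP)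
  exact (Finset.insert_erase (P.mem_part ha)).symm.trans (congrArg (insert a) hspec)

lemma uniqueElt_mem_erase {k : ℕ} {P : Finpartition s} (ha : a ∈ s)
    (hP : P ∈ (good s k).filter (fun P => ¬ 3 ≤ (P.part a).card)) :
    uniqueElt (erase_part_card_one ha hP) ∈ s.erase a := by
  have : uniqueElt (erase_part_card_one ha hP) ∈ (P.part a).erase a :=
    uniqueElt_mem _
  obtain ⟨hne, hmem⟩ := Finset.mem_erase.1 this
  exact Finset.mem_erase.2 ⟨hne, P.le ((P.part_mem.2 ha)) hmem⟩

set_option maxHeartbeats 1000000 in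
lemma sdiff_part_eq {k : ℕ} {P : Finpartition s} (ha : a ∈ s)
    (hP : P ∈ (good s k).filter (fun P => ¬ 3 ≤ (P.part a).card)) :
    s \ P.part a = (s.erase a).erase (uniqueElt (erase_part_card_one ha hP)) := by
  have hp := part_eq_pair ha hP
  generalize hu : uniqueElt (erase_part_card_one ha hP) = u at hp ⊢
  rw [hp]
  ext x
  simp only [Finset.mem_sdiff, Finset.mem_insert, Finset.mem_singleton, Finset.mem_erase]
  tauto

lemma union_pair {j : α} (ha : a ∈ s) (hj : j ∈ s.erase a) :
    ((s.erase a).erase j) ⊔ ({a, j} : Finset α) = s := by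
  obtain ⟨hja, hjs⟩ := Finset.mem_erase.1 hj
  show ((s.erase a).erase j) ∪ ({a, j} : Finset α) = s
  ext x
  simp only [Finset.mem_union, Finset.mem_erase, Finset.mem_insert, Finset.mem_singleton]
  constructor
  · rintro (⟨_, _, hx⟩ | rfl | rfl) <;> first | exact hx | exact ha | exact hjs
  · intro hx
    by_cases h1 : x = a
    · exact Or.inr (Or.inl h1)
    · by_cases h2 : x = j
      · exact Or.inr (Or.inr h2)
      · exact Or.inl ⟨h2, h1, hx⟩

lemma card_good_small (ha : a ∈ s) (k : ℕ) :
    ((good s (k+1)).filter (fun P => ¬ 3 ≤ (P.part a).card)).card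
      = ((s.erase a).sigma (fun j => good ((s.erase a).erase j) k)).card := by
  classical
  refine Finset.card_bij'
    (fun P hP => ⟨uniqueElt (erase_part_card_one ha hP),
      (P.avoid (P.part a)).copy (sdiff_part_eq ha hP)⟩)
    (fun x hx => x.2.extend (b := {a, x.1})
      (by simp [Finset.bot_eq_empty, Finset.insert_ne_empty])
      (by
        rw [Finset.disjoint_insert_right, Finset.disjoint_singleton_right]
        exact ⟨fun h => Finset.notMem_erase a s (Finset.mem_of_mem_erase h),
          Finset.notMem_erase _ _⟩)
      (union_pair ha (Finset.mem_sigma.1 hx).1)) ?_ ?_ ?_ ?_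
  · -- hi
    intro P hP
    obtain ⟨hPg, h3⟩ := Finset.mem_filter.1 hP
    obtain ⟨hk, hsz⟩ := mem_good.1 hPg
    rw [Finset.mem_sigma]
    refine ⟨uniqueElt_mem_erase ha hP, ?_⟩
    rw [mem_good, Finpartition.copy_parts, avoid_parts_of_mem P ((P.part_mem.2 ha))]
    refine ⟨?_, ?_⟩
    · rw [Finset.card_erase_of_mem ((P.part_mem.2 ha)), hk]
      omega
    · intro c hc
      exact hsz c (Finset.mem_of_mem_erase hc)
  · -- hj
    intro x hx
    obtain ⟨hjmem, hQg⟩ := Finset.mem_sigma.1 hx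
    obtain ⟨hk, hsz⟩ := mem_good.1 hQg
    have hja : x.1 ≠ a := (Finset.mem_erase.1 hjmem).1
    have hpairne : ({a, x.1} : Finset α).card = 2 := by
      rw [Finset.card_insert_of_notMem (by simp [Ne.symm hja]), Finset.card_singleton]
    have hpairnotmem : ({a, x.1} : Finset α) ∉ x.2.parts := by
      intro h
      exact Finset.notMem_erase a s
        (Finset.mem_of_mem_erase (x.2.le h (Finset.mem_insert_self _ _)))
    have hbne : ({a, x.1} : Finset α) ≠ ⊥ := by
      simp [Finset.bot_eq_empty, Finset.insert_ne_empty]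
    have hdisj : Disjoint ((s.erase a).erase x.1) ({a, x.1} : Finset α) := by
      rw [Finset.disjoint_insert_right, Finset.disjoint_singleton_right]
      exact ⟨fun h => Finset.notMem_erase a s (Finset.mem_of_mem_erase h),
        Finset.notMem_erase _ _⟩
    have hparts : (x.2.extend (b := {a, x.1}) hbne hdisj (union_pair ha hjmem)).parts
        = insert {a, x.1} x.2.parts := Finpartition.extend_parts _ _ _ _
    have hparta : (x.2.extend (b := {a, x.1}) hbne hdisj (union_pair ha hjmem)).part a
        = {a, x.1} := by
      apply Finpartition.part_eq_of_mem
      · rw [hparts]; exact Finset.mem_insert_self _ _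
      · exact Finset.mem_insert_self _ _
    rw [Finset.mem_filter]
    constructor
    · rw [mem_good, hparts]
      refine ⟨?_, ?_⟩
      · rw [Finset.card_insert_of_notMem hpairnotmem, hk]
      · intro c hc
        rcases Finset.mem_insert.1 hc with rfl | hc'
        · omega
        · exact hsz c hc'
    · rw [hparta]
      omega
  · -- left_inv
    intro P hP
    obtain ⟨hPg, h3⟩ := Finset.mem_filter.1 hP
    ext1
    rw [Finpartition.extend_parts, Finpartition.copy_parts,
      avoid_parts_of_mem P ((P.part_mem.2 ha)), ← part_eq_pair ha hP,
      Finset.insert_erase ((P.part_mem.2 ha))]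
  · -- right_inv
    intro x hx
    obtain ⟨j0, Q⟩ := x
    obtain ⟨hjmem, hQg⟩ := Finset.mem_sigma.1 hx
    have hja : j0 ≠ a := (Finset.mem_erase.1 hjmem).1
    have hpairnotmem : ({a, j0} : Finset α) ∉ Q.parts := by
      intro h
      exact Finset.notMem_erase a s
        (Finset.mem_of_mem_erase (Q.le h (Finset.mem_insert_self _ _)))
    set P' := Q.extend (b := {a, j0})
      (by simp [Finset.bot_eq_empty, Finset.insert_ne_empty])
      (by
        rw [Finset.disjoint_insert_right, Finset.disjoint_singleton_right]
        exact ⟨fun h => Finset.notMem_erase a s (Finset.mem_of_mem_erase h),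
          Finset.notMem_erase _ _⟩)
      (union_pair ha hjmem) with hP'def
    have hparts : P'.parts = insert {a, j0} Q.parts := Finpartition.extend_parts _ _ _ _
    have hparta : P'.part a = {a, j0} := by
      apply Finpartition.part_eq_of_mem
      · rw [hparts]; exact Finset.mem_insert_self _ _
      · exact Finset.mem_insert_self _ _
    have hfst : ∀ hcard, uniqueElt (b := (P'.part a).erase a) hcard = j0 := by
      intro hcard
      apply uniqueElt_eq
      rw [hparta, Finset.erase_insert (by simp [Ne.symm hja])]
    have hcard : ((P'.part a).erase a).card = 1 := by
      rw [hparta, Finset.erase_insert (by simp [Ne.symm hja])]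
      exact Finset.card_singleton _
    refine Sigma.ext (hfst hcard) ?_
    refine Finpartition.heq_of_parts (by simp only [hfst]) ?_
    rw [Finpartition.copy_parts, avoid_parts_of_mem P' ((P'.part_mem.2 ha)), hparta, hparts,
      Finset.erase_insert hpairnotmem]

end PartB

section Recurrence

lemma good_rec (s : Finset α) (a : α) (ha : a ∈ s) (k : ℕ) :
    (good s (k+1)).card = (k+1) * (good (s.erase a) (k+1)).card
      + ∑ j ∈ s.erase a, (good ((s.erase a).erase j) k).card := by
  classical
  rw [← Finset.card_filter_add_card_filter_not
    (s := good s (k+1)) (p := fun P => 3 ≤ (P.part a).card),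
    card_good_big ha (k+1), card_good_small ha k, Finset.card_sigma]

noncomputable def partD (n k : ℕ) : ℕ :=
  Nat.card {P : Finpartition (Finset.univ : Finset (Fin n)) //
    P.parts.card = k ∧ ∀ b ∈ P.parts, 2 ≤ b.card}

lemma partD_eq (n k : ℕ) : partD n k = (good (Finset.univ : Finset (Fin n)) k).card := by
  classical
  rw [partD, Nat.card_eq_fintype_card, Fintype.card_subtype, good]
  congr 1
  ext P
  simp only [Finset.mem_filter]

lemma partD_zero {n : ℕ} (hn : 1 ≤ n) : partD n 0 = 0 := by
  rw [partD_eq, Finset.card_eq_zero, Finset.eq_empty_iff_forall_notMem]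
  intro P hP
  obtain ⟨hk, _⟩ := mem_good.1 hP
  rw [Finset.card_eq_zero, Finpartition.parts_eq_empty_iff] at hk
  have : (⟨0, by omega⟩ : Fin n) ∈ (Finset.univ : Finset (Fin n)) := Finset.mem_univ _
  rw [hk] at this
  simp at this

lemma partD_vanish {n k : ℕ} (h : n < k) : partD n k = 0 := by
  rw [partD_eq, Finset.card_eq_zero, Finset.eq_empty_iff_forall_notMem]
  intro P hP
  obtain ⟨hk, _⟩ := mem_good.1 hP
  have := P.card_parts_le_card
  rw [hk, Finset.card_univ, Fintype.card_fin] at this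
  omega

lemma partD_rec (m k : ℕ) :
    partD (m+2) (k+1) = (k+1) * partD (m+1) (k+1) + (m+1) * partD m k := by
  classical
  have ha : (0 : Fin (m+2)) ∈ (Finset.univ : Finset (Fin (m+2))) := Finset.mem_univ _
  have hcard_erase : ((Finset.univ : Finset (Fin (m+2))).erase 0).card = m + 1 := by
    rw [Finset.card_erase_of_mem ha, Finset.card_univ, Fintype.card_fin]
    omega
  have h1 : (good ((Finset.univ : Finset (Fin (m+2))).erase 0) (k+1)).card
      = partD (m+1) (k+1) := by
    rw [partD_eq]
    apply card_good_eq
    rw [hcard_erase, Finset.card_univ, Fintype.card_fin]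
  have h2 : ∀ j ∈ (Finset.univ : Finset (Fin (m+2))).erase 0,
      (good (((Finset.univ : Finset (Fin (m+2))).erase 0).erase j) k).card = partD m k := by
    intro j hj
    rw [partD_eq]
    apply card_good_eq
    rw [Finset.card_erase_of_mem hj, hcard_erase, Finset.card_univ, Fintype.card_fin]
    omega
  rw [partD_eq, good_rec (Finset.univ : Finset (Fin (m+2))) 0 ha k, h1,
    Finset.sum_congr rfl h2, Finset.sum_const, smul_eq_mul, hcard_erase]

end Recurrence

noncomputable def Dpoly (n : ℕ) : Polynomial ℝ :=
  ∑ k ∈ Finset.range (n + 1), Polynomial.C (partD n k : ℝ) * Polynomial.X ^ k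

lemma coeff_Dpoly (n m : ℕ) : (Dpoly n).coeff m = (partD n m : ℝ) := by
  rw [Dpoly, Polynomial.finset_sum_coeff]
  simp only [Polynomial.coeff_C_mul, Polynomial.coeff_X_pow, mul_ite, mul_one, mul_zero]
  rw [Finset.sum_ite_eq (Finset.range (n+1)) m (fun k => (partD n k : ℝ))]
  split_ifs with h
  · rfl
  · rw [Finset.mem_range, not_lt] at h
    rw [partD_vanish (by omega)]
    simp

theorem Dpoly_recurrence (n : ℕ) (hn : 2 ≤ n) :
    Dpoly n = Polynomial.X *
      (Polynomial.derivative (Dpoly (n - 1)) +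
        Polynomial.C ((n : ℝ) - 1) * Dpoly (n - 2)) := by
  obtain ⟨N, rfl⟩ : ∃ N, n = N + 2 := ⟨n - 2, by omega⟩
  have h1 : N + 2 - 1 = N + 1 := by omega
  have h2 : N + 2 - 2 = N := by omega
  rw [h1, h2]
  ext m
  rcases m with _ | m
  · rw [Polynomial.mul_coeff_zero, Polynomial.coeff_X_zero, zero_mul, coeff_Dpoly,
      partD_zero (by omega)]
    simp
  · rw [Polynomial.coeff_X_mul, coeff_Dpoly, Polynomial.coeff_add,
      Polynomial.coeff_derivative, coeff_Dpoly, Polynomial.coeff_C_mul, coeff_Dpoly,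
      partD_rec N m]
    push_cast
    ring
end

section
/- For all n ≥ 1 and k ≥ 1, Σ_{k≥1} k·D(n,k) = D(n+1) − n·D(n−1), where D(m) = Σ_k D(m,k). -/
open Finset

variable {α β : Type*} [DecidableEq α] [DecidableEq β]

/-- Push a finpartition forward along an embedding. -/
def Finpartition.mapEmb (f : α ↪ β) {s : Finset α} (P : Finpartition s) {t : Finset β}
    (hst : s.map f = t) : Finpartition t where
  parts := P.parts.map (Finset.mapEmbedding f).toEmbedding
  supIndep := by
    rw [Finset.supIndep_iff_pairwiseDisjoint]
    rintro a ha b hb hab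
    simp only [coe_map, Set.mem_image, mem_coe] at ha hb
    obtain ⟨a', ha', rfl⟩ := ha
    obtain ⟨b', hb', rfl⟩ := hb
    have hne : a' ≠ b' := by rintro rfl; exact hab rfl
    have := P.disjoint ha' hb' hne
    simpa only [Function.onFun, id_eq, Finset.mapEmbedding_apply,
      RelEmbedding.coe_toEmbedding, Finset.disjoint_map] using this
  sup_parts := by
    subst hst
    ext x
    simp only [Finset.mem_sup, Finset.mem_map, Finset.mapEmbedding_apply, RelEmbedding.coe_toEmbedding]
    constructor
    · rintro ⟨b, ⟨a, ha, rfl⟩, hx⟩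
      obtain ⟨y, hy, rfl⟩ := Finset.mem_map.1 hx
      exact ⟨y, by rw [← P.sup_parts]; exact Finset.mem_sup.2 ⟨a, ha, hy⟩, rfl⟩
    · rintro ⟨y, hy, rfl⟩
      rw [← P.sup_parts] at hy
      obtain ⟨a, ha, hy⟩ := Finset.mem_sup.1 hy
      exact ⟨a.map f, ⟨a, ha, rfl⟩, Finset.mem_map_of_mem f hy⟩
  bot_notMem := by
    simp only [Finset.bot_eq_empty, Finset.mem_map, Finset.mapEmbedding_apply, RelEmbedding.coe_toEmbedding]
    rintro ⟨a, ha, h⟩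
    rw [Finset.map_eq_empty] at h
    subst h; exact P.bot_notMem ha

lemma Finpartition.parts_mapEmb (f : α ↪ β) {s : Finset α} (P : Finpartition s) {t : Finset β}
    (hst : s.map f = t) : (P.mapEmb f hst).parts = P.parts.map (Finset.mapEmbedding f).toEmbedding := rfl

omit [DecidableEq α] [DecidableEq β] in
lemma Finset.map_preimage_of_subset (f : α ↪ β) {b : Finset β} {s : Finset α}
    (hb : b ⊆ s.map f) : (b.preimage f f.injective.injOn).map f = b := by
  ext x
  simp only [Finset.mem_map, Finset.mem_preimage]
  constructor
  · rintro ⟨a, ha, rfl⟩; exact ha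
  · intro hx
    obtain ⟨a, _, rfl⟩ := Finset.mem_map.1 (hb hx)
    exact ⟨a, hx, rfl⟩

/-- Pull back a finpartition along an embedding. -/
noncomputable def Finpartition.comapEmb (f : α ↪ β) {s : Finset α} {t : Finset β}
    (hst : s.map f = t) (Q : Finpartition t) : Finpartition s where
  parts := Q.parts.image (fun b => b.preimage f f.injective.injOn)
  supIndep := by
    rw [Finset.supIndep_iff_pairwiseDisjoint]
    rintro a ha b hb hab
    simp only [coe_image, Set.mem_image, mem_coe] at ha hb
    obtain ⟨a', ha', rfl⟩ := ha
    obtain ⟨b', hb', rfl⟩ := hb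
    have hne : a' ≠ b' := by
      rintro rfl; exact hab rfl
    have hd := Q.disjoint ha' hb' hne
    simp only [Function.onFun, id_eq] at hd ⊢
    rw [Finset.disjoint_left] at hd ⊢
    intro x hx hx'
    exact hd (Finset.mem_preimage.1 hx) (Finset.mem_preimage.1 hx')
  sup_parts := by
    subst hst
    ext x
    simp only [Finset.mem_sup, Finset.mem_image]
    constructor
    · rintro ⟨c, ⟨b, hb, rfl⟩, hx⟩
      simp only [id_eq, Finset.mem_preimage] at hx
      have : f x ∈ s.map f := Q.le hb hx
      exact (Finset.mem_map' f).1 this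
    · intro hx
      have : f x ∈ s.map f := (Finset.mem_map' f).2 hx
      rw [← Q.sup_parts] at this
      obtain ⟨b, hb, hxb⟩ := Finset.mem_sup.1 this
      exact ⟨_, ⟨b, hb, rfl⟩, Finset.mem_preimage.2 hxb⟩
  bot_notMem := by
    simp only [Finset.bot_eq_empty, Finset.mem_image]
    rintro ⟨b, hb, h⟩
    have hbe : b = ∅ := by
      have := Finset.map_preimage_of_subset f (hst ▸ Q.le hb)
      rw [h, Finset.map_empty] at this
      exact this.symm
    subst hbe
    exact Q.bot_notMem hb

/-- Transfer equivalence of finpartitions along an embedding. -/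
noncomputable def Finpartition.mapEmbEquiv (f : α ↪ β) {s : Finset α} {t : Finset β}
    (hst : s.map f = t) : Finpartition s ≃ Finpartition t where
  toFun P := P.mapEmb f hst
  invFun Q := Q.comapEmb f hst
  left_inv P := by
    ext b
    simp only [comapEmb, parts_mapEmb, Finset.mem_image, Finset.mem_map,
      RelEmbedding.coe_toEmbedding, Finset.mapEmbedding_apply]
    constructor
    · rintro ⟨c, ⟨a, ha, rfl⟩, rfl⟩
      rwa [Finset.preimage_map]
    · intro hb
      exact ⟨b.map f, ⟨b, hb, rfl⟩, Finset.preimage_map f b⟩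
  right_inv Q := by
    ext b
    simp only [parts_mapEmb, comapEmb, Finset.mem_map, Finset.mem_image,
      RelEmbedding.coe_toEmbedding, Finset.mapEmbedding_apply]
    constructor
    · rintro ⟨c, ⟨d, hd, rfl⟩, rfl⟩
      rwa [Finset.map_preimage_of_subset f (hst ▸ Q.le hd)]
    · intro hb
      exact ⟨b.preimage f f.injective.injOn, ⟨b, hb, rfl⟩,
        Finset.map_preimage_of_subset f (hst ▸ Q.le hb)⟩

noncomputable def partDtot (n : ℕ) : ℕ :=
  Nat.card {P : Finpartition (Finset.univ : Finset (Fin n)) //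
    ∀ b ∈ P.parts, 2 ≤ b.card}

section transfer

variable {γ : Type*} [LinearOrder γ] {s : Finset γ} {m : ℕ}

lemma map_univ_orderEmbOfFin (h : s.card = m) :
    (Finset.univ : Finset (Fin m)).map (s.orderEmbOfFin h).toEmbedding = s := by
  ext x
  simp only [Finset.mem_map, Finset.mem_univ, true_and, RelEmbedding.coe_toEmbedding]
  constructor
  · rintro ⟨a, _, rfl⟩
    exact Finset.orderEmbOfFin_mem s h a
  · intro hx
    have : x ∈ Set.range (s.orderEmbOfFin h) := by
      rw [Finset.range_orderEmbOfFin]; exact hx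
    obtain ⟨a, ha⟩ := this
    exact ⟨a, ha⟩

/-- The transfer equivalence from partitions of `Fin m`'s universe to partitions of `s`. -/
noncomputable def transferEquiv (h : s.card = m) :
    Finpartition (Finset.univ : Finset (Fin m)) ≃ Finpartition s :=
  Finpartition.mapEmbEquiv (s.orderEmbOfFin h).toEmbedding (map_univ_orderEmbOfFin h)

lemma transferEquiv_parts_card (h : s.card = m)
    (P : Finpartition (Finset.univ : Finset (Fin m))) :
    (transferEquiv h P).parts.card = P.parts.card :=
  Finset.card_map _

lemma transferEquiv_blocks (h : s.card = m)
    (P : Finpartition (Finset.univ : Finset (Fin m))) :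
    (∀ b ∈ (transferEquiv h P).parts, 2 ≤ b.card) ↔ ∀ b ∈ P.parts, 2 ≤ b.card := by
  constructor
  · intro hb b hbP
    have := hb (b.map _) (Finset.mem_map_of_mem (Finset.mapEmbedding _).toEmbedding hbP)
    rwa [Finset.card_map] at this
  · intro hb b hbP
    obtain ⟨a, ha, rfl⟩ := Finset.mem_map.1 hbP
    exact le_trans (hb a ha) (Finset.card_map _).ge

lemma card_partDtot (h : s.card = m) :
    Nat.card {P : Finpartition s // ∀ b ∈ P.parts, 2 ≤ b.card} = partDtot m := by
  rw [partDtot]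
  exact (Nat.card_congr (Equiv.subtypeEquiv
    (q := fun Q => ∀ b ∈ Q.parts, 2 ≤ b.card) (transferEquiv h)
    (fun P => (transferEquiv_blocks h P).symm))).symm

lemma card_partD (h : s.card = m) (k : ℕ) :
    Nat.card {P : Finpartition s // P.parts.card = k ∧ ∀ b ∈ P.parts, 2 ≤ b.card}
      = partD m k := by
  rw [partD]
  refine (Nat.card_congr (Equiv.subtypeEquiv
    (q := fun Q => Q.parts.card = k ∧ ∀ b ∈ Q.parts, 2 ≤ b.card)
    (transferEquiv h) (fun P => ?_))).symm
  exact and_congr (by rw [transferEquiv_parts_card h P]) (transferEquiv_blocks h P).symm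

end transfer

section surgery

variable {s : Finset α} {t : α} {c : Finset α}

lemma Finpartition.avoid_parts_of_mem (P : Finpartition s) (hc : c ∈ P.parts) {u : Finset α}
    (hu : s \ c = u) : ((P.avoid c).copy hu).parts = P.parts.erase c := by
  ext d
  rw [Finpartition.copy, Finset.mem_erase]
  simp only [Finpartition.mem_avoid]
  constructor
  · rintro ⟨e, he, hec, rfl⟩
    have hne : e ≠ c := by rintro rfl; exact hec le_rfl
    have hdisj : Disjoint e c := P.disjoint he hc hne
    rw [Finset.sdiff_eq_self_of_disjoint hdisj]
    exact ⟨hne, he⟩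
  · rintro ⟨hne, hd⟩
    refine ⟨d, hd, ?_, Finset.sdiff_eq_self_of_disjoint (P.disjoint hd hc hne)⟩
    intro hle
    exact (P.nonempty_of_mem_parts hd).ne_empty
      (disjoint_self.1 ((P.disjoint hd hc hne).mono_right hle))

/-- Insert a new element into a chosen part of a finpartition. -/
def Finpartition.insertElem (P : Finpartition s) (ht : t ∉ s) (hc : c ∈ P.parts) :
    Finpartition (insert t s) where
  parts := insert (insert t c) (P.parts.erase c)
  supIndep := by
    rw [Finset.supIndep_iff_pairwiseDisjoint, Finset.coe_insert]
    refine (P.disjoint.subset ?_).insert ?_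
    · exact fun d hd => (Finset.mem_erase.1 hd).2
    · intro d hd _
      simp only [Finset.mem_coe, Finset.mem_erase] at hd
      have htd : t ∉ d := fun h => ht (P.le hd.2 h)
      have : Disjoint c d := P.disjoint hc hd.2 (fun h => hd.1 h.symm)
      simp only [id_eq, Finset.disjoint_insert_left]
      exact ⟨htd, this⟩
  sup_parts := by
    have h1 : (insert c (P.parts.erase c)).sup id = s := by
      rw [Finset.insert_erase hc, P.sup_parts]
    rw [Finset.sup_insert] at h1
    rw [Finset.sup_insert]
    simp only [id_eq, Finset.sup_eq_union] at h1 ⊢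
    rw [Finset.insert_union, h1]
  bot_notMem := by
    simp only [Finset.bot_eq_empty, Finset.mem_insert, Finset.mem_erase]
    rintro (h | ⟨-, h⟩)
    · exact (Finset.insert_ne_empty t c) h.symm
    · exact P.bot_notMem h

lemma Finpartition.insertElem_parts (P : Finpartition s) (ht : t ∉ s) (hc : c ∈ P.parts) :
    (P.insertElem ht hc).parts = insert (insert t c) (P.parts.erase c) := rfl

end surgery

section main

variable {s : Finset α} {t : α}

lemma pair_sup (ht : t ∉ s) {j : α} (hj : j ∈ s) :
    (s.erase j) ⊔ ({j, t} : Finset α) = insert t s := by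
  rw [Finset.sup_eq_union]
  ext x
  simp only [Finset.mem_union, Finset.mem_erase, Finset.mem_insert, Finset.mem_singleton]
  constructor
  · rintro (⟨-, hx⟩ | (rfl | rfl))
    · exact Or.inr hx
    · exact Or.inr hj
    · exact Or.inl rfl
  · rintro (rfl | hx)
    · exact Or.inr (Or.inr rfl)
    · rcases eq_or_ne x j with rfl | hne
      · exact Or.inr (Or.inl rfl)
      · exact Or.inl ⟨hne, hx⟩

lemma pair_disj (ht : t ∉ s) {j : α} : Disjoint (s.erase j) ({j, t} : Finset α) := by
  rw [Finset.disjoint_right]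
  intro x hx
  simp only [Finset.mem_insert, Finset.mem_singleton] at hx
  rcases hx with rfl | rfl
  · exact Finset.notMem_erase _ _
  · exact fun h => ht (Finset.mem_of_mem_erase h)

/-- Extend a partition of `s.erase j` by the pair `{j, t}`. -/
def extendPair (ht : t ∉ s) {j : α} (hj : j ∈ s) (Q : Finpartition (s.erase j)) :
    Finpartition (insert t s) :=
  Q.extend (Finset.insert_ne_empty _ _) (pair_disj ht) (pair_sup ht hj)

lemma extendPair_parts (ht : t ∉ s) {j : α} (hj : j ∈ s) (Q : Finpartition (s.erase j)) :
    (extendPair ht hj Q).parts = insert {j, t} Q.parts := rfl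

lemma card_pair_jt (ht : t ∉ s) {j : α} (hj : j ∈ s) : ({j, t} : Finset α).card = 2 := by
  rw [Finset.card_insert_of_notMem
      (by simp only [Finset.mem_singleton]; exact fun h => ht (h ▸ hj)),
    Finset.card_singleton]

lemma extendPair_part_t (ht : t ∉ s) {j : α} (hj : j ∈ s) (Q : Finpartition (s.erase j)) :
    (extendPair ht hj Q).part t = {j, t} := by
  refine Finpartition.part_eq_of_mem _ ?_ (by simp)
  rw [extendPair_parts]
  exact Finset.mem_insert_self _ _

def psi2 (ht : t ∉ s)
    (x : Σ j : {j // j ∈ s}, {Q : Finpartition (s.erase j.1) // ∀ b ∈ Q.parts, 2 ≤ b.card}) :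
    {P : Finpartition (insert t s) // (∀ b ∈ P.parts, 2 ≤ b.card) ∧ (P.part t).card = 2} := by
  refine ⟨extendPair ht x.1.2 x.2.1, ?_, ?_⟩
  · intro b hb
    rw [extendPair_parts, Finset.mem_insert] at hb
    rcases hb with rfl | hb
    · exact (card_pair_jt ht x.1.2).ge
    · exact x.2.2 b hb
  · rw [extendPair_part_t ht x.1.2 x.2.1]
    exact card_pair_jt ht x.1.2

lemma psi2_bijective (ht : t ∉ s) : Function.Bijective (psi2 (s := s) ht) := by
  constructor
  · rintro ⟨⟨j, hj⟩, ⟨Q, hQ⟩⟩ ⟨⟨j', hj'⟩, ⟨Q', hQ'⟩⟩ heq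
    have hparts := congrArg (fun P => P.1.part t) heq
    simp only [psi2, extendPair_part_t] at hparts
    have hjj : j = j' := by
      have : j ∈ ({j', t} : Finset α) := hparts ▸ Finset.mem_insert_self j {t}
      simp only [Finset.mem_insert, Finset.mem_singleton] at this
      rcases this with h | h
      · exact h
      · exact absurd (h ▸ hj) ht
    subst hjj
    have hQparts : Q.parts = Q'.parts := by
      have h2 := congrArg (fun P => P.1.parts) heq
      simp only [psi2, extendPair_parts] at h2
      have hn : ({j, t} : Finset α) ∉ Q.parts := fun h =>
        (Finset.notMem_erase j s) (Q.le h (Finset.mem_insert_self j {t}))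
      have hn' : ({j, t} : Finset α) ∉ Q'.parts := fun h =>
        (Finset.notMem_erase j s) (Q'.le h (Finset.mem_insert_self j {t}))
      rw [← Finset.erase_insert hn, h2, Finset.erase_insert hn']
    have : Q = Q' := Finpartition.ext hQparts
    subst this
    rfl
  · rintro ⟨P, hall, h2⟩
    have htmem : t ∈ insert t s := Finset.mem_insert_self t s
    set b := P.part t with hb
    have hbmem : b ∈ P.parts := P.part_mem.2 htmem
    have htb : t ∈ b := P.mem_part htmem
    obtain ⟨j, hjeq⟩ : ∃ j, b.erase t = {j} := by
      rw [← Finset.card_eq_one, Finset.card_erase_of_mem htb, h2]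
    have hjt : j ≠ t := by
      intro h
      have := hjeq ▸ Finset.mem_singleton_self j
      exact Finset.notMem_erase t b (h ▸ this)
    have hjb : j ∈ b := Finset.mem_of_mem_erase (hjeq ▸ Finset.mem_singleton_self j)
    have hjs : j ∈ s := by
      have := P.le hbmem hjb
      rcases Finset.mem_insert.1 this with h | h
      · exact absurd h hjt
      · exact h
    have hbpair : b = {j, t} := by
      rw [← Finset.insert_erase htb, hjeq]
      ext x; simp only [Finset.mem_insert, Finset.mem_singleton]; tauto
    have hdiff : insert t s \ b = s.erase j := by
      rw [hbpair]
      ext x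
      simp only [Finset.mem_sdiff, Finset.mem_insert, Finset.mem_erase, Finset.mem_singleton,
        not_or]
      constructor
      · rintro ⟨rfl | hx, hxj, hxt⟩
        · exact absurd rfl hxt
        · exact ⟨hxj, hx⟩
      · rintro ⟨hxj, hx⟩
        exact ⟨Or.inr hx, hxj, fun h => ht (h ▸ hx)⟩
    set Q : Finpartition (s.erase j) := (P.avoid b).copy hdiff with hQ
    have hQparts : Q.parts = P.parts.erase b := P.avoid_parts_of_mem hbmem hdiff
    have hQall : ∀ d ∈ Q.parts, 2 ≤ d.card := by
      intro d hd
      rw [hQparts] at hd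
      exact hall d (Finset.mem_of_mem_erase hd)
    refine ⟨⟨⟨j, hjs⟩, ⟨Q, hQall⟩⟩, ?_⟩
    apply Subtype.ext
    apply Finpartition.ext
    show (extendPair ht hjs Q).parts = P.parts
    rw [extendPair_parts, hQparts, ← hbpair, Finset.insert_erase hbmem]

end main

section main1

variable {s : Finset α} {t : α}

def psi1 (ht : t ∉ s)
    (x : Σ Q : {Q : Finpartition s // ∀ b ∈ Q.parts, 2 ≤ b.card}, {c // c ∈ Q.1.parts}) :
    {P : Finpartition (insert t s) // (∀ b ∈ P.parts, 2 ≤ b.card) ∧ 3 ≤ (P.part t).card} := by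
  obtain ⟨⟨Q, hQ⟩, ⟨c, hc⟩⟩ := x
  have htc : t ∉ c := fun h => ht (Q.le hc h)
  have hpart : (Q.insertElem ht hc).part t = insert t c := by
    refine Finpartition.part_eq_of_mem _ ?_ (Finset.mem_insert_self t c)
    rw [Finpartition.insertElem_parts]
    exact Finset.mem_insert_self _ _
  refine ⟨Q.insertElem ht hc, ?_, ?_⟩
  · intro b hb
    rw [Finpartition.insertElem_parts, Finset.mem_insert] at hb
    rcases hb with rfl | hb
    · rw [Finset.card_insert_of_notMem htc]
      exact le_trans (by omega) (Nat.add_le_add_right (hQ c hc) 1)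
    · exact hQ b (Finset.mem_of_mem_erase hb)
  · rw [hpart, Finset.card_insert_of_notMem htc]
    exact le_trans (by omega) (Nat.add_le_add_right (hQ c hc) 1)

lemma psi1_bijective (ht : t ∉ s) : Function.Bijective (psi1 (s := s) ht) := by
  constructor
  · rintro ⟨⟨Q, hQ⟩, ⟨c, hc⟩⟩ ⟨⟨Q', hQ'⟩, ⟨c', hc'⟩⟩ heq
    have htc : t ∉ c := fun h => ht (Q.le hc h)
    have htc' : t ∉ c' := fun h => ht (Q'.le hc' h)
    have hpart := congrArg (fun P => P.1.part t) heq
    have hpc : (Q.insertElem ht hc).part t = insert t c := by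
      refine Finpartition.part_eq_of_mem _ (Finset.mem_insert_self _ _)
        (Finset.mem_insert_self t c)
    have hpc' : (Q'.insertElem ht hc').part t = insert t c' := by
      refine Finpartition.part_eq_of_mem _ (Finset.mem_insert_self _ _)
        (Finset.mem_insert_self t c')
    simp only [psi1] at hpart
    rw [hpc, hpc'] at hpart
    have hcc : c = c' := by
      rw [← Finset.erase_insert htc, ← Finset.erase_insert htc', hpart]
    subst hcc
    have hQQ : Q = Q' := by
      apply Finpartition.ext
      have h2 := congrArg (fun P => P.1.parts) heq
      simp only [psi1, Finpartition.insertElem_parts] at h2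
      have hn : insert t c ∉ Q.parts.erase c := fun h =>
        ht (Q.le (Finset.mem_of_mem_erase h) (Finset.mem_insert_self t c))
      have hn' : insert t c ∉ Q'.parts.erase c := fun h =>
        ht (Q'.le (Finset.mem_of_mem_erase h) (Finset.mem_insert_self t c))
      have he : Q.parts.erase c = Q'.parts.erase c := by
        rw [← Finset.erase_insert hn, h2, Finset.erase_insert hn']
      rw [← Finset.insert_erase hc, he, Finset.insert_erase hc']
    subst hQQ
    rfl
  · rintro ⟨P, hall, h3⟩
    have htmem : t ∈ insert t s := Finset.mem_insert_self t s
    set b := P.part t with hbdef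
    have hbmem : b ∈ P.parts := P.part_mem.2 htmem
    have htb : t ∈ b := P.mem_part htmem
    set c := b.erase t with hcdef
    have hcb : c ⊆ b := Finset.erase_subset t b
    have hcard : 2 ≤ c.card := by
      rw [hcdef, Finset.card_erase_of_mem htb]
      omega
    have hcnotpart : c ∉ P.parts := by
      intro h
      have hne : c ≠ b := by
        intro h'
        have : t ∈ c := h'.symm ▸ htb
        exact Finset.notMem_erase t b this
      have hdisj := P.disjoint h hbmem hne
      have : c = ∅ := disjoint_self.1 (hdisj.mono_right hcb)
      rw [this] at hcard
      simp at hcard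
    have hts : insert t s \ {t} = s := by
      ext x
      simp only [Finset.mem_sdiff, Finset.mem_insert, Finset.mem_singleton]
      constructor
      · rintro ⟨rfl | hx, hxt⟩
        · exact absurd rfl hxt
        · exact hx
      · intro hx
        exact ⟨Or.inr hx, fun h => ht (h ▸ hx)⟩
    set Q : Finpartition s := (P.avoid {t}).copy hts with hQdef
    have hQparts : Q.parts = insert c (P.parts.erase b) := by
      ext d
      show d ∈ (P.avoid {t}).parts ↔ _
      rw [Finpartition.mem_avoid, Finset.mem_insert, Finset.mem_erase]
      constructor
      · rintro ⟨e, he, het, rfl⟩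
        by_cases hte : t ∈ e
        · left
          have heb : e = b := (P.part_eq_of_mem he hte).symm
          rw [heb, ← Finset.erase_eq]
        · right
          rw [Finset.sdiff_eq_self_of_disjoint (Finset.disjoint_singleton_right.2 hte)]
          refine ⟨fun h => hte (h ▸ htb), he⟩
      · rintro (rfl | ⟨hne, hd⟩)
        · refine ⟨b, hbmem, ?_, by rw [← Finset.erase_eq]⟩
          intro hle
          have := Finset.card_le_card hle
          rw [Finset.card_singleton] at this
          have := hall b hbmem
          omega
        · have htd : t ∉ d := fun h => hne (P.part_eq_of_mem hd h).symm
          refine ⟨d, hd, ?_, Finset.sdiff_eq_self_of_disjoint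
            (Finset.disjoint_singleton_right.2 htd)⟩
          intro hle
          have := Finset.card_le_card hle
          rw [Finset.card_singleton] at this
          have := hall d hd
          omega
    have hcQ : c ∈ Q.parts := by rw [hQparts]; exact Finset.mem_insert_self _ _
    have hQall : ∀ d ∈ Q.parts, 2 ≤ d.card := by
      intro d hd
      rw [hQparts, Finset.mem_insert] at hd
      rcases hd with rfl | hd
      · exact hcard
      · exact hall d (Finset.mem_of_mem_erase hd)
    refine ⟨⟨⟨Q, hQall⟩, ⟨c, hcQ⟩⟩, ?_⟩
    apply Subtype.ext
    apply Finpartition.ext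
    show (Q.insertElem ht hcQ).parts = P.parts
    have hcX : c ∉ P.parts.erase b := fun h => hcnotpart (Finset.mem_of_mem_erase h)
    have hitc : insert t c = b := Finset.insert_erase htb
    rw [Finpartition.insertElem_parts, hQparts, Finset.erase_insert hcX, hitc,
      Finset.insert_erase hbmem]

end main1

section assemble

variable {γ : Type*} [LinearOrder γ] {s : Finset γ} {t : γ} {n : ℕ}

lemma card_split (ht : t ∉ s) :
    Nat.card {P : Finpartition (insert t s) // ∀ b ∈ P.parts, 2 ≤ b.card}
      = Nat.card {P : Finpartition (insert t s) //
          (∀ b ∈ P.parts, 2 ≤ b.card) ∧ 3 ≤ (P.part t).card}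
      + Nat.card {P : Finpartition (insert t s) //
          (∀ b ∈ P.parts, 2 ≤ b.card) ∧ (P.part t).card = 2} := by
  classical
  have e1 : {P : Finpartition (insert t s) // ∀ b ∈ P.parts, 2 ≤ b.card} ≃
      {x : {P : Finpartition (insert t s) // ∀ b ∈ P.parts, 2 ≤ b.card} //
        3 ≤ (x.1.part t).card} ⊕
      {x : {P : Finpartition (insert t s) // ∀ b ∈ P.parts, 2 ≤ b.card} //
        ¬ 3 ≤ (x.1.part t).card} :=
    (Equiv.sumCompl _).symm
  rw [Nat.card_congr e1, Nat.card_sum]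
  congr 1
  · exact Nat.card_congr (Equiv.subtypeSubtypeEquivSubtypeInter
      (fun P : Finpartition (insert t s) => ∀ b ∈ P.parts, 2 ≤ b.card)
      (fun P => 3 ≤ (P.part t).card))
  · refine Nat.card_congr ((Equiv.subtypeSubtypeEquivSubtypeInter
      (fun P : Finpartition (insert t s) => ∀ b ∈ P.parts, 2 ≤ b.card)
      (fun P => ¬ 3 ≤ (P.part t).card)).trans
      (Equiv.subtypeEquivRight fun P => and_congr_right fun hall => ?_))
    have h2 : 2 ≤ (P.part t).card :=
      hall _ (P.part_mem.2 (Finset.mem_insert_self t s))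
    omega

lemma card_sigma_parts (s : Finset γ) :
    Nat.card (Σ Q : {Q : Finpartition s // ∀ b ∈ Q.parts, 2 ≤ b.card}, {c // c ∈ Q.1.parts})
      = ∑ Q : {Q : Finpartition s // ∀ b ∈ Q.parts, 2 ≤ b.card}, Q.1.parts.card := by
  rw [Nat.card_eq_fintype_card, Fintype.card_sigma]
  exact Finset.sum_congr rfl fun Q _ => Fintype.card_coe _

lemma sum_parts_card (hs : s.card = n) :
    ∑ Q : {Q : Finpartition s // ∀ b ∈ Q.parts, 2 ≤ b.card}, Q.1.parts.card
      = ∑ k ∈ Finset.range (n + 1), k * partD n k := by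
  have hmaps : ∀ Q ∈ (Finset.univ :
      Finset {Q : Finpartition s // ∀ b ∈ Q.parts, 2 ≤ b.card}),
      Q.1.parts.card ∈ Finset.range (n + 1) := fun Q _ => Finset.mem_range.2 (by
    have := Q.1.card_parts_le_card
    omega)
  have hfib := Finset.sum_fiberwise_of_maps_to
    (g := fun Q : {Q : Finpartition s // ∀ b ∈ Q.parts, 2 ≤ b.card} => Q.1.parts.card)
    hmaps (fun Q => Q.1.parts.card)
  rw [← hfib]
  refine Finset.sum_congr rfl fun k _ => ?_
  rw [Finset.sum_congr rfl (fun Q hQ => (Finset.mem_filter.1 hQ).2), Finset.sum_const,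
    smul_eq_mul, mul_comm]
  congr 1
  rw [← Fintype.card_subtype, ← Nat.card_eq_fintype_card, ← card_partD hs k]
  exact Nat.card_congr ((Equiv.subtypeSubtypeEquivSubtypeInter
    (fun Q : Finpartition s => ∀ b ∈ Q.parts, 2 ≤ b.card)
    (fun Q => Q.parts.card = k)).trans
    (Equiv.subtypeEquivRight fun P => and_comm))

lemma card_sigma_pairs (ht : t ∉ s) (hs : s.card = n) :
    Nat.card (Σ j : {j // j ∈ s},
        {Q : Finpartition (s.erase j.1) // ∀ b ∈ Q.parts, 2 ≤ b.card})
      = n * partDtot (n - 1) := by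
  rw [Nat.card_eq_fintype_card, Fintype.card_sigma]
  rw [Finset.sum_congr rfl (fun j _ => by
    rw [← Nat.card_eq_fintype_card,
      card_partDtot (by rw [Finset.card_erase_of_mem j.2, hs])])]
  rw [Finset.sum_const, smul_eq_mul]
  congr 1
  rw [Finset.card_univ, Fintype.card_coe, hs]

lemma key (ht : t ∉ s) (hs : s.card = n) :
    partDtot (n + 1)
      = (∑ k ∈ Finset.range (n + 1), k * partD n k) + n * partDtot (n - 1) := by
  have hins : (insert t s).card = n + 1 := by
    rw [Finset.card_insert_of_notMem ht, hs]
  rw [← card_partDtot hins, card_split ht]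
  congr 1
  · rw [← Nat.card_congr (Equiv.ofBijective _ (psi1_bijective ht)),
      card_sigma_parts, sum_parts_card hs]
  · rw [← Nat.card_congr (Equiv.ofBijective _ (psi2_bijective ht)),
      card_sigma_pairs ht hs]

end assemble

theorem sum_k_partD (n : ℕ) (hn : 1 ≤ n) :
    (∑ k ∈ Finset.range (n + 1), k * partD n k : ℤ) =
      (partDtot (n + 1) : ℤ) - n * partDtot (n - 1) := by
  have ht : (0 : Fin (n + 1)) ∉ (Finset.univ.erase (0 : Fin (n + 1))) :=
    Finset.notMem_erase _ _
  have hs : (Finset.univ.erase (0 : Fin (n + 1))).card = n := by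
    rw [Finset.card_erase_of_mem (Finset.mem_univ _), Finset.card_univ, Fintype.card_fin]
    omega
  have h := key ht hs
  have h' := congrArg (Nat.cast : ℕ → ℤ) h
  push_cast at h' ⊢
  linarith
end

section
/- For all positive integers n, B(n) = D(n) + D(n+1), where B(n) is the n-th Bell number and D(m) is the number of partitions of {1,...,m} with no singleton blocks. -/
open Finset

section Aux

variable {α β : Type*}

/-- `a` is in a singleton class of `s`. -/
def isSing (s : Setoid α) (a : α) : Prop := ∀ b, s.r a b → b = a

/-- no class of `s` is a singleton -/
def nosing (s : Setoid α) : Prop := ∀ a, ∃ b, s.r a b ∧ b ≠ a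

/-- some class of `s` is a singleton -/
def hassing (s : Setoid α) : Prop := ∃ a, isSing s a

lemma not_hassing_iff (s : Setoid α) : ¬ hassing s ↔ nosing s := by
  unfold hassing isSing nosing
  push_neg
  rfl

/-- Transfer a setoid along an equivalence. -/
def setoidCongr (e : α ≃ β) : Setoid α ≃ Setoid β where
  toFun s := ⟨fun x y => s.r (e.symm x) (e.symm y),
    ⟨fun _ => s.refl _, fun h => s.symm h, fun h h' => s.trans h h'⟩⟩
  invFun t := ⟨fun x y => t.r (e x) (e y),
    ⟨fun _ => t.refl _, fun h => t.symm h, fun h h' => t.trans h h'⟩⟩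
  left_inv s := Setoid.ext fun a b => by show s.r (e.symm (e a)) (e.symm (e b)) ↔ s.r a b; simp
  right_inv t := Setoid.ext fun a b => by show t.r (e (e.symm a)) (e (e.symm b)) ↔ t.r a b; simp

lemma nosing_setoidCongr (e : α ≃ β) (s : Setoid α) :
    nosing (setoidCongr e s) ↔ nosing s := by
  constructor
  · intro h a
    obtain ⟨y, hy, hne⟩ := h (e a)
    have hy' : s.r (e.symm (e a)) (e.symm y) := hy
    rw [e.symm_apply_apply] at hy'
    refine ⟨e.symm y, hy', fun hcon => hne ?_⟩
    rw [← hcon, e.apply_symm_apply]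
  · intro h x
    obtain ⟨b, hb, hne⟩ := h (e.symm x)
    have hb' : s.r (e.symm x) (e.symm (e b)) := by rw [e.symm_apply_apply]; exact hb
    refine ⟨e b, hb', fun hcon => hne ?_⟩
    rw [← hcon, e.symm_apply_apply]

/-- The forward map: split the singleton classes of `s` off and merge them with `none`. -/
def fmap (s : Setoid α) : Setoid (Option α) where
  r x y := match x, y with
    | none, none => True
    | none, some b => isSing s b
    | some a, none => isSing s a
    | some a, some b => (isSing s a ∧ isSing s b) ∨ s.r a b
  iseqv := by
    constructor
    · rintro (_ | a)
      · trivial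
      · exact Or.inr (s.refl a)
    · rintro (_ | a) (_ | b) h
      · trivial
      · exact h
      · exact h
      · rcases h with ⟨ha, hb⟩ | h
        · exact Or.inl ⟨hb, ha⟩
        · exact Or.inr (s.symm h)
    · rintro (_ | a) (_ | b) (_ | c) h h'
      · trivial
      · exact h'
      · trivial
      · rcases h' with ⟨hb, hc⟩ | h'
        · exact hc
        · have hcb := h c h'
          subst hcb
          exact h
      · exact h
      · exact Or.inl ⟨h, h'⟩
      · rcases h with ⟨ha, _⟩ | h
        · exact ha
        · have hab := h' a (s.symm h)
          subst hab
          exact h'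
      · rcases h with ⟨ha, hb⟩ | h
        · rcases h' with ⟨_, hc⟩ | h'
          · exact Or.inl ⟨ha, hc⟩
          · have hcb := hb c h'
            subst hcb
            exact Or.inl ⟨ha, hb⟩
        · rcases h' with ⟨hb, hc⟩ | h'
          · have hab := hb a (s.symm h)
            subst hab
            exact Or.inl ⟨hb, hc⟩
          · exact Or.inr (s.trans h h')

/-- The backward map: keep classes not related to `none`, split the class of `none` into
singletons. -/
def gmap (t : Setoid (Option α)) : Setoid α where
  r a b := a = b ∨ (¬ t.r (some a) none ∧ t.r (some a) (some b))
  iseqv := by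
    constructor
    · exact fun a => Or.inl rfl
    · rintro a b (rfl | ⟨hn, h⟩)
      · exact Or.inl rfl
      · refine Or.inr ⟨fun hc => hn (t.trans h hc), t.symm h⟩
    · rintro a b c (rfl | ⟨hn, h⟩) h'
      · exact h'
      · rcases h' with rfl | ⟨hn', h'⟩
        · exact Or.inr ⟨hn, h⟩
        · exact Or.inr ⟨hn, t.trans h h'⟩

lemma gmap_fmap (s : Setoid α) : gmap (fmap s) = s := by
  apply Setoid.ext
  intro a b
  show a = b ∨ (¬ _ ∧ _) ↔ _
  constructor
  · rintro (rfl | ⟨hn, h⟩)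
    · exact s.refl a
    · rcases h with ⟨ha, _⟩ | h
      · exact absurd ha hn
      · exact h
  · intro h
    by_cases hab : a = b
    · exact Or.inl hab
    · refine Or.inr ⟨fun hs => hab ((hs b h).symm ▸ rfl), Or.inr h⟩

lemma isSing_gmap {t : Setoid (Option α)} (ht : nosing t) (a : α) :
    isSing (gmap t) a ↔ t.r (some a) none := by
  constructor
  · intro h
    by_contra hn
    obtain ⟨y, hy, hne⟩ := ht (some a)
    match y with
    | none => exact hn hy
    | some b =>
        have hb : b ≠ a := fun hc => hne (by rw [hc])
        exact hb (h b (Or.inr ⟨hn, hy⟩))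
  · intro h b hb
    rcases hb with rfl | ⟨hn, _⟩
    · rfl
    · exact absurd h hn

lemma fmap_gmap {t : Setoid (Option α)} (ht : nosing t) : fmap (gmap t) = t := by
  apply Setoid.ext
  rintro (_ | a) (_ | b)
  · exact ⟨fun _ => t.refl none, fun _ => trivial⟩
  · show isSing (gmap t) b ↔ _
    rw [isSing_gmap ht]
    exact ⟨fun h => t.symm h, fun h => t.symm h⟩
  · show isSing (gmap t) a ↔ _
    exact isSing_gmap ht a
  · show (isSing (gmap t) a ∧ isSing (gmap t) b) ∨ (gmap t).r a b ↔ _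
    rw [isSing_gmap ht, isSing_gmap ht]
    constructor
    · rintro (⟨ha, hb⟩ | (rfl | ⟨_, h⟩))
      · exact t.trans ha (t.symm hb)
      · exact t.refl _
      · exact h
    · intro h
      by_cases hn : t.r (some a) none
      · exact Or.inl ⟨hn, t.trans (t.symm h) hn⟩
      · exact Or.inr (Or.inr ⟨hn, h⟩)

lemma nosing_fmap {s : Setoid α} (hs : hassing s) : nosing (fmap s) := by
  rintro (_ | a)
  · obtain ⟨a, ha⟩ := hs
    exact ⟨some a, ha, by simp⟩
  · by_cases h : isSing s a
    · exact ⟨none, h, by simp⟩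
    · unfold isSing at h
      push_neg at h
      obtain ⟨b, hb, hne⟩ := h
      exact ⟨some b, Or.inr hb, by simpa using hne⟩

lemma hassing_gmap {t : Setoid (Option α)} (ht : nosing t) : hassing (gmap t) := by
  obtain ⟨y, hy, hne⟩ := ht none
  match y with
  | none => exact absurd rfl hne
  | some a => exact ⟨a, (isSing_gmap ht a).2 (t.symm hy)⟩

/-- The core bijection. -/
def coreEquiv : {s : Setoid α // hassing s} ≃ {t : Setoid (Option α) // nosing t} where
  toFun s := ⟨fmap s.1, nosing_fmap s.2⟩
  invFun t := ⟨gmap t.1, hassing_gmap t.2⟩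
  left_inv s := Subtype.ext (gmap_fmap s.1)
  right_inv t := Subtype.ext (fmap_gmap t.2)

end Aux

section Bridge

variable {α : Type*} [Fintype α] [DecidableEq α]

/-- The setoid associated to a finpartition of `univ`. -/
def pSetoid (P : Finpartition (univ : Finset α)) : Setoid α where
  r a b := b ∈ P.part a
  iseqv := by
    have key : ∀ a b : α, b ∈ P.part a → P.part b = P.part a := fun a b h =>
      P.eq_of_mem_parts (P.part_mem.2 (mem_univ b)) (P.part_mem.2 (mem_univ a))
        (P.mem_part (mem_univ b)) h
    constructor
    · exact fun a => P.mem_part (mem_univ a)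
    · intro a b h
      rw [key a b h]
      exact P.mem_part (mem_univ a)
    · intro a b c hab hbc
      rw [← key a b hab]
      exact hbc

instance (P : Finpartition (univ : Finset α)) : DecidableRel (pSetoid P).r :=
  fun a b => inferInstanceAs (Decidable (b ∈ P.part a))

lemma parts_eq_image_part (P : Finpartition (univ : Finset α)) :
    P.parts = univ.image P.part := by
  ext t
  simp only [mem_image, mem_univ, true_and]
  constructor
  · intro ht
    obtain ⟨a, ha⟩ := P.nonempty_of_mem_parts ht
    exact ⟨a, P.part_eq_of_mem ht ha⟩
  · rintro ⟨a, rfl⟩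
    exact P.part_mem.2 (mem_univ a)

lemma ofSetoid_pSetoid (P : Finpartition (univ : Finset α)) :
    Finpartition.ofSetoid (pSetoid P) = P := by
  have hpart : ∀ a, (Finpartition.ofSetoid (pSetoid P)).part a = P.part a := by
    intro a
    ext b
    rw [Finpartition.mem_part_ofSetoid_iff_rel]
    rfl
  ext1
  rw [parts_eq_image_part (Finpartition.ofSetoid (pSetoid P)), parts_eq_image_part P]
  exact Finset.image_congr fun a _ => hpart a

lemma pSetoid_ofSetoid (s : Setoid α) [DecidableRel s.r] :
    pSetoid (Finpartition.ofSetoid s) = s :=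
  Setoid.ext fun _ _ => Finpartition.mem_part_ofSetoid_iff_rel

/-- Finpartitions of `univ` correspond to setoids. -/
noncomputable def finpartitionSetoidEquiv : Finpartition (univ : Finset α) ≃ Setoid α where
  toFun := pSetoid
  invFun s := letI := Classical.decRel s.r; Finpartition.ofSetoid s
  left_inv P := by
    dsimp only
    have h := ofSetoid_pSetoid P
    convert h using 2
  right_inv s := letI := Classical.decRel s.r; pSetoid_ofSetoid s

lemma nosing_parts_iff (P : Finpartition (univ : Finset α)) :
    (∀ b ∈ P.parts, 2 ≤ b.card) ↔ nosing (pSetoid P) := by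
  constructor
  · intro h a
    have hmem := P.part_mem.2 (mem_univ a)
    have hcard := h _ hmem
    obtain ⟨b, hb, hne⟩ := Finset.exists_mem_ne hcard a
    exact ⟨b, hb, hne⟩
  · intro h b hb
    obtain ⟨a, ha⟩ := P.nonempty_of_mem_parts hb
    obtain ⟨c, hc, hne⟩ := h a
    have hpa : P.part a = b := P.part_eq_of_mem hb ha
    have hc' : c ∈ P.part a := hc
    rw [hpa] at hc'
    exact Finset.one_lt_card.mpr ⟨a, ha, c, hc', fun hcon => hne hcon.symm⟩

end Bridge

instance (α : Type*) [Finite α] : Finite (Setoid α) :=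
  Finite.of_injective (fun s => s.r) fun _ _ h =>
    Setoid.ext fun a b => iff_of_eq (congrFun (congrFun h a) b)


noncomputable def bell (n : ℕ) : ℕ :=
  Nat.card (Finpartition (Finset.univ : Finset (Fin n)))

lemma partDtot_eq (m : ℕ) : partDtot m = Nat.card {s : Setoid (Fin m) // nosing s} :=
  Nat.card_congr (Equiv.subtypeEquiv finpartitionSetoidEquiv fun P => nosing_parts_iff P)

theorem bell_eq_partDtot_add (n : ℕ) (hn : 1 ≤ n) :
    bell n = partDtot n + partDtot (n + 1) := by
  classical
  rw [partDtot_eq, partDtot_eq]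
  have h1 : bell n =
      Nat.card {s : Setoid (Fin n) // hassing s} + Nat.card {s : Setoid (Fin n) // ¬ hassing s} := by
    rw [bell, Nat.card_congr (finpartitionSetoidEquiv (α := Fin n)),
      Nat.card_congr (Equiv.sumCompl (fun s : Setoid (Fin n) => hassing s)).symm,
      Nat.card_sum]
  rw [h1]
  have h2 : Nat.card {s : Setoid (Fin n) // ¬ hassing s} = Nat.card {s : Setoid (Fin n) // nosing s} :=
    Nat.card_congr (Equiv.subtypeEquivRight fun s => not_hassing_iff s)
  have h3 : Nat.card {s : Setoid (Fin n) // hassing s}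
      = Nat.card {s : Setoid (Fin (n + 1)) // nosing s} := by
    refine Nat.card_congr (coreEquiv.trans ?_)
    exact Equiv.subtypeEquiv (setoidCongr finSuccEquivLast.symm)
      fun t => (nosing_setoidCongr _ t).symm
  rw [h2, h3, Nat.add_comm]
end

section
/- The ratio D(n+1)/D(n) tends to infinity as n → ∞, where D(m) is the number of partitions of {1,...,m} with no singleton blocks; consequently D(n+1)/B(n) → 1. -/
open Finset
namespace PartTool
variable {α : Type*} [Fintype α] [DecidableEq α]
noncomputable def kpart {β : Type*} [DecidableEq β] (q : α → β) :
    Finpartition (univ : Finset α) :=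
  @Finpartition.ofSetoid α _ _ (Setoid.ker q) (fun a b => decEq (q a) (q b))
instance kerDec {β : Type*} [DecidableEq β] (q : α → β) :
    DecidableRel ⇑(Setoid.ker q) := fun a b => decEq (q a) (q b)
lemma mem_part_kpart {β : Type*} [DecidableEq β] (q : α → β) (a b : α) :
    b ∈ (kpart q).part a ↔ q b = q a := by
  rw [kpart, Finpartition.mem_part_ofSetoid_iff_rel]
  exact ⟨fun h => (Setoid.ker_def.mp h).symm, fun h => Setoid.ker_def.mpr h.symm⟩
lemma part_ext {P Q : Finpartition (univ : Finset α)}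
    (h : ∀ a, P.part a = Q.part a) : P = Q := by
  ext t
  constructor
  · intro ht
    obtain ⟨x, hx⟩ := P.nonempty_of_mem_parts ht
    rw [← P.part_eq_of_mem ht hx, h x]
    exact Q.part_mem.mpr (mem_univ x)
  · intro ht
    obtain ⟨x, hx⟩ := Q.nonempty_of_mem_parts ht
    rw [← Q.part_eq_of_mem ht hx, ← h x]
    exact P.part_mem.mpr (mem_univ x)
lemma mem_part_iff {P : Finpartition (univ : Finset α)} {a b : α} :
    b ∈ P.part a ↔ P.part b = P.part a := by
  rw [P.mem_part_iff_part_eq_part (mem_univ b) (mem_univ a)]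
lemma part_eq_filter (P : Finpartition (univ : Finset α)) (a : α) :
    P.part a = univ.filter (fun b => P.part b = P.part a) := by
  ext b; simp [mem_part_iff]
lemma exists_part_eq {P : Finpartition (univ : Finset α)} {t : Finset α}
    (ht : t ∈ P.parts) : ∃ a, P.part a = t := by
  obtain ⟨x, hx⟩ := P.nonempty_of_mem_parts ht
  exact ⟨x, P.part_eq_of_mem ht hx⟩
lemma two_le_card_part {P : Finpartition (univ : Finset α)} {a b : α}
    (hab : b ≠ a) (hb : b ∈ P.part a) : 2 ≤ (P.part a).card :=
  Finset.one_lt_card.mpr ⟨b, hb, a, P.mem_part (mem_univ a), hab⟩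
lemma part_ext_of_ker {P Q : Finpartition (univ : Finset α)}
    (h : ∀ a b, P.part b = P.part a ↔ Q.part b = Q.part a) : P = Q := by
  refine part_ext fun a => ?_
  rw [part_eq_filter P a, part_eq_filter Q a]
  ext b; simp only [mem_filter, mem_univ, true_and, h]

/-! ### insertion of the new point `Fin.last n` into a chosen part -/
variable {n : ℕ}

def qins (P : Finpartition (univ : Finset (Fin n))) (x0 : Fin n) :
    Fin (n + 1) → Finset (Fin n) :=
  Fin.lastCases (P.part x0) (fun a => P.part a)

@[simp] lemma qins_last (P : Finpartition (univ : Finset (Fin n))) (x0 : Fin n) :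
    qins P x0 (Fin.last n) = P.part x0 := Fin.lastCases_last

@[simp] lemma qins_castSucc (P : Finpartition (univ : Finset (Fin n))) (x0 a : Fin n) :
    qins P x0 a.castSucc = P.part a := by simp [qins]

noncomputable def ins (P : Finpartition (univ : Finset (Fin n))) (x0 : Fin n) :
    Finpartition (univ : Finset (Fin (n + 1))) := kpart (qins P x0)

lemma ins_sf {P : Finpartition (univ : Finset (Fin n))} {x0 : Fin n}
    (hP : ∀ b ∈ P.parts, 2 ≤ b.card) :
    ∀ b ∈ (ins P x0).parts, 2 ≤ b.card := by
  intro t ht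
  obtain ⟨y, rfl⟩ := exists_part_eq ht
  induction y using Fin.lastCases with
  | last =>
      refine two_le_card_part (b := x0.castSucc) (Fin.castSucc_lt_last x0).ne ?_
      rw [ins, mem_part_kpart]; simp
  | cast a =>
      have h2 : 1 < (P.part a).card := hP _ (P.part_mem.mpr (mem_univ a))
      obtain ⟨c, hc, hca⟩ := Finset.exists_mem_ne h2 a
      refine two_le_card_part (b := c.castSucc) ?_ ?_
      · simpa [Fin.castSucc_inj] using hca
      · rw [ins, mem_part_kpart]
        simp [mem_part_iff.mp hc]

lemma kpart_rel_iff {β γ : Type*} [DecidableEq β] [DecidableEq γ]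
    {q : α → β} {q' : α → γ} (h : kpart q = kpart q') {a b : α} :
    q b = q a ↔ q' b = q' a := by
  rw [← mem_part_kpart q a b, ← mem_part_kpart q' a b, h]

lemma ins_inj {P P' : Finpartition (univ : Finset (Fin n))} {x0 x0' : Fin n}
    (h : ins P x0 = ins P' x0') : P = P' ∧ P.part x0 = P'.part x0' := by
  have hrel : ∀ a b : Fin (n+1), qins P x0 b = qins P x0 a ↔ qins P' x0' b = qins P' x0' a :=
    fun a b => kpart_rel_iff h
  have hPP : P = P' := by
    refine part_ext_of_ker fun a b => ?_
    have := hrel a.castSucc b.castSucc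
    simpa using this
  refine ⟨hPP, ?_⟩
  have := (hrel (Fin.last n) x0.castSucc).mp (by simp)
  rw [hPP]
  simpa using this


/-! ### merging singletons with the new point, and the inverse -/

lemma part_card_one_iff {P : Finpartition (univ : Finset (Fin n))} {a : Fin n} :
    (P.part a).card = 1 ↔ P.part a = {a} := by
  constructor
  · intro h
    obtain ⟨c, hc⟩ := Finset.card_eq_one.mp h
    have := P.mem_part (mem_univ a)
    rw [hc] at this ⊢
    simp_all
  · intro h; rw [h]; simp

lemma mem_part_comm {P : Finpartition (univ : Finset (Fin n))} {a b : Fin n} :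
    b ∈ P.part a ↔ a ∈ P.part b := by
  rw [mem_part_iff, mem_part_iff, eq_comm]

def qmrg (P : Finpartition (univ : Finset (Fin n))) : Fin (n + 1) → Finset (Fin n) :=
  Fin.lastCases ∅ (fun a => if (P.part a).card = 1 then ∅ else P.part a)

@[simp] lemma qmrg_last (P : Finpartition (univ : Finset (Fin n))) :
    qmrg P (Fin.last n) = ∅ := Fin.lastCases_last

@[simp] lemma qmrg_castSucc (P : Finpartition (univ : Finset (Fin n))) (a : Fin n) :
    qmrg P a.castSucc = if (P.part a).card = 1 then ∅ else P.part a := by simp [qmrg]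

noncomputable def mrg (P : Finpartition (univ : Finset (Fin n))) :
    Finpartition (univ : Finset (Fin (n + 1))) := kpart (qmrg P)

def qatz (Q : Finpartition (univ : Finset (Fin (n + 1)))) : Fin n → Finset (Fin (n + 1)) :=
  fun a => if Fin.last n ∈ Q.part a.castSucc then {a.castSucc} else Q.part a.castSucc

noncomputable def atz (Q : Finpartition (univ : Finset (Fin (n + 1)))) :
    Finpartition (univ : Finset (Fin n)) := kpart (qatz Q)

lemma part_nonempty (P : Finpartition (univ : Finset α)) (a : α) :
    (P.part a).Nonempty := ⟨a, P.mem_part (mem_univ a)⟩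

lemma mrg_sf {P : Finpartition (univ : Finset (Fin n))} {a0 : Fin n}
    (h0 : (P.part a0).card = 1) : ∀ b ∈ (mrg P).parts, 2 ≤ b.card := by
  intro t ht
  obtain ⟨y, rfl⟩ := exists_part_eq ht
  have hq0 : qmrg P a0.castSucc = ∅ := by simp [h0]
  induction y using Fin.lastCases with
  | last =>
      refine two_le_card_part (b := a0.castSucc) (Fin.castSucc_lt_last a0).ne ?_
      rw [mrg, mem_part_kpart, hq0, qmrg_last]
  | cast a =>
      by_cases h1 : (P.part a).card = 1
      · refine two_le_card_part (a := a.castSucc) (b := Fin.last n)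
          (Fin.castSucc_lt_last a).ne' ?_
        rw [mrg, mem_part_kpart, qmrg_last, qmrg_castSucc, if_pos h1]
      · have h2 : 1 < (P.part a).card := by
          have := (part_nonempty P a).card_pos
          omega
        obtain ⟨c, hc, hca⟩ := Finset.exists_mem_ne h2 a
        have hpc : P.part c = P.part a := mem_part_iff.mp hc
        refine two_le_card_part (b := c.castSucc) (by simpa [Fin.castSucc_inj] using hca) ?_
        rw [mrg, mem_part_kpart, qmrg_castSucc, qmrg_castSucc, hpc]

lemma atz_mrg (P : Finpartition (univ : Finset (Fin n))) : atz (mrg P) = P := by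
  have hlast : ∀ a : Fin n,
      (Fin.last n ∈ (mrg P).part a.castSucc ↔ (P.part a).card = 1) := by
    intro a
    rw [mrg, mem_part_kpart, qmrg_last, qmrg_castSucc]
    constructor
    · intro h
      by_contra h1
      rw [if_neg h1] at h
      exact (part_nonempty P a).ne_empty h.symm
    · intro h; rw [if_pos h]
  refine part_ext fun a => ?_
  ext b
  rw [atz, mem_part_kpart, mem_part_iff (P := P)]
  unfold qatz
  by_cases ha1 : (P.part a).card = 1 <;> by_cases hb1 : (P.part b).card = 1
  · rw [if_pos ((hlast a).mpr ha1), if_pos ((hlast b).mpr hb1)]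
    rw [part_card_one_iff.mp ha1, part_card_one_iff.mp hb1]
    simp [Fin.castSucc_inj]
  · rw [if_pos ((hlast a).mpr ha1), if_neg (fun h => hb1 ((hlast b).mp h))]
    constructor
    · intro h
      have : b.castSucc ∈ ({a.castSucc} : Finset (Fin (n+1))) := by
        rw [← h]; exact (mrg P).mem_part (mem_univ _)
      simp only [Finset.mem_singleton, Fin.castSucc_inj] at this
      subst this; exact absurd ha1 hb1
    · intro h; rw [h] at hb1; exact absurd ha1 hb1
  · rw [if_neg (fun h => ha1 ((hlast a).mp h)), if_pos ((hlast b).mpr hb1)]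
    constructor
    · intro h
      have : a.castSucc ∈ ({b.castSucc} : Finset (Fin (n+1))) := by
        rw [h]; exact (mrg P).mem_part (mem_univ _)
      simp only [Finset.mem_singleton, Fin.castSucc_inj] at this
      subst this; exact absurd hb1 ha1
    · intro h; rw [h] at hb1; exact absurd hb1 ha1
  · rw [if_neg (fun h => ha1 ((hlast a).mp h)), if_neg (fun h => hb1 ((hlast b).mp h))]
    have hmm : b.castSucc ∈ (mrg P).part a.castSucc ↔ P.part b = P.part a := by
      rw [mrg, mem_part_kpart, qmrg_castSucc, qmrg_castSucc, if_neg ha1, if_neg hb1]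
    exact (mem_part_iff (P := mrg P)).symm.trans hmm

section AtzQ
variable {Q : Finpartition (univ : Finset (Fin (n + 1)))}
  (hQ : ∀ b ∈ Q.parts, 2 ≤ b.card)
include hQ

lemma atz_part_singleton :
    ∀ a : Fin n, ((atz Q).part a = {a} ↔ Fin.last n ∈ Q.part a.castSucc) := by
  intro a
  constructor
  · intro h
    by_contra hl
    have hq : qatz Q a = Q.part a.castSucc := if_neg hl
    have h2 : 1 < (Q.part a.castSucc).card := hQ _ (Q.part_mem.mpr (mem_univ _))
    obtain ⟨z, hz, hza⟩ := Finset.exists_mem_ne h2 a.castSucc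
    have hzl : z ≠ Fin.last n := fun hc => hl (hc ▸ hz)
    obtain ⟨c, rfl⟩ := Fin.exists_castSucc_eq.mpr hzl
    have hcz : Q.part c.castSucc = Q.part a.castSucc := mem_part_iff.mp hz
    have hcl : Fin.last n ∉ Q.part c.castSucc := hcz ▸ hl
    have hcmem : c ∈ (atz Q).part a := by
      rw [atz, mem_part_kpart, hq]
      unfold qatz
      rw [if_neg hcl, hcz]
    rw [h] at hcmem
    simp only [Finset.mem_singleton] at hcmem
    subst hcmem
    exact hza rfl
  · intro hl
    ext b
    simp only [Finset.mem_singleton]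
    rw [atz, mem_part_kpart]
    unfold qatz
    rw [if_pos hl]
    by_cases hbl : Fin.last n ∈ Q.part b.castSucc
    · rw [if_pos hbl]; simp [Fin.castSucc_inj]
    · rw [if_neg hbl]
      constructor
      · intro h
        have : b.castSucc ∈ ({a.castSucc} : Finset (Fin (n+1))) := by
          rw [← h]; exact Q.mem_part (mem_univ _)
        simp only [Finset.mem_singleton, Fin.castSucc_inj] at this
        exact this
      · rintro rfl
        exact absurd hl hbl

lemma atz_exists_singleton : ∃ a : Fin n, ((atz Q).part a).card = 1 := by
  have h2 : 1 < (Q.part (Fin.last n)).card := hQ _ (Q.part_mem.mpr (mem_univ _))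
  obtain ⟨z, hz, hzl⟩ := Finset.exists_mem_ne h2 (Fin.last n)
  obtain ⟨a, rfl⟩ := Fin.exists_castSucc_eq.mpr hzl
  refine ⟨a, ?_⟩
  rw [part_card_one_iff, atz_part_singleton hQ]
  rw [mem_part_comm]
  exact hz

lemma mrg_atz : mrg (atz Q) = Q := by
  have hcard1 : ∀ a : Fin n,
      (((atz Q).part a).card = 1 ↔ Fin.last n ∈ Q.part a.castSucc) := by
    intro a
    rw [part_card_one_iff, atz_part_singleton hQ]
  have hql : ∀ x : Fin n, qmrg (atz Q) x.castSucc =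
      if Fin.last n ∈ Q.part x.castSucc then ∅ else (atz Q).part x := by
    intro x
    rw [qmrg_castSucc]
    exact if_congr (hcard1 x) rfl rfl
  have hA : ∀ a b : Fin n, Fin.last n ∉ Q.part a.castSucc →
      Fin.last n ∉ Q.part b.castSucc →
      ((atz Q).part b = (atz Q).part a ↔ Q.part b.castSucc = Q.part a.castSucc) := by
    intro a b hal hbl
    rw [← mem_part_iff, atz, mem_part_kpart]
    unfold qatz
    rw [if_neg hal, if_neg hbl]
  refine part_ext fun y => ?_
  ext z
  rw [mrg, mem_part_kpart, mem_part_iff (P := Q)]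
  induction y using Fin.lastCases with
  | last =>
      induction z using Fin.lastCases with
      | last => simp
      | cast b =>
          rw [qmrg_last, hql b]
          by_cases hbl : Fin.last n ∈ Q.part b.castSucc
          · rw [if_pos hbl]
            simp only [iff_true_intro rfl, true_iff]
            exact (mem_part_iff.mp hbl).symm
          · rw [if_neg hbl]
            constructor
            · intro h
              exact absurd h (part_nonempty (atz Q) b).ne_empty
            · intro h
              exact absurd (h ▸ Q.mem_part (mem_univ (Fin.last n))) hbl
  | cast a =>
      induction z using Fin.lastCases with
      | last =>
          rw [qmrg_last, hql a]
          by_cases hal : Fin.last n ∈ Q.part a.castSucc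
          · rw [if_pos hal]
            simp only [iff_true_intro rfl, true_iff]
            exact mem_part_iff.mp hal
          · rw [if_neg hal]
            constructor
            · intro h
              exact absurd h (part_nonempty (atz Q) a).ne_empty.symm
            · intro h
              exact absurd (h.symm ▸ Q.mem_part (mem_univ (Fin.last n))) hal
      | cast b =>
          rw [hql a, hql b]
          by_cases hal : Fin.last n ∈ Q.part a.castSucc <;>
            by_cases hbl : Fin.last n ∈ Q.part b.castSucc
          · rw [if_pos hal, if_pos hbl]
            simp only [iff_true_intro rfl, true_iff]
            rw [← mem_part_iff.mp hal, mem_part_iff.mp hbl]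
          · rw [if_pos hal, if_neg hbl]
            constructor
            · intro h
              exact absurd h (part_nonempty (atz Q) b).ne_empty
            · intro h
              exact absurd (h ▸ hal) hbl
          · rw [if_neg hal, if_pos hbl]
            constructor
            · intro h
              exact absurd h (part_nonempty (atz Q) a).ne_empty.symm
            · intro h
              exact absurd (h.symm ▸ hbl) hal
          · rw [if_neg hal, if_neg hbl]
            exact hA a b hal hbl
end AtzQ

/-! ### the Bell identity -/

abbrev SFsub (n : ℕ) :=
  {P : Finpartition (univ : Finset (Fin n)) // ∀ b ∈ P.parts, 2 ≤ b.card}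

noncomputable def sfEquiv (n : ℕ) :
    Finpartition (univ : Finset (Fin n)) ≃ (SFsub n ⊕ SFsub (n + 1)) where
  toFun P :=
    if h : ∀ b ∈ P.parts, 2 ≤ b.card then .inl ⟨P, h⟩
    else .inr ⟨mrg P, by
      push_neg at h
      obtain ⟨b, hb, hb2⟩ := h
      obtain ⟨a, ha⟩ := exists_part_eq hb
      have h1 : (P.part a).card = 1 := by
        have := (part_nonempty P a).card_pos
        rw [ha] at this ⊢
        omega
      exact mrg_sf h1⟩
  invFun X := Sum.elim (fun P => P.1) (fun Q => atz Q.1) X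
  left_inv P := by
    by_cases h : ∀ b ∈ P.parts, 2 ≤ b.card
    · dsimp only
      rw [dif_pos h, Sum.elim_inl]
    · dsimp only
      rw [dif_neg h]
      exact atz_mrg P
  right_inv X := by
    rcases X with ⟨P, hP⟩ | ⟨Q, hQ⟩
    · dsimp only [Sum.elim_inl]
      rw [dif_pos hP]
    · have hns : ¬ ∀ b ∈ (atz Q).parts, 2 ≤ b.card := by
        intro hall
        obtain ⟨a, ha⟩ := atz_exists_singleton hQ
        have := hall _ ((atz Q).part_mem.mpr (mem_univ a))
        omega
      simp only [Sum.elim_inr, hns, dif_neg, not_false_iff]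
      congr 1
      exact (dif_neg hns).trans (congrArg Sum.inr (Subtype.ext (mrg_atz hQ)))

lemma bell_identity (n : ℕ) :
    Nat.card (Finpartition (univ : Finset (Fin n))) =
      Nat.card (SFsub n) + Nat.card (SFsub (n + 1)) := by
  rw [Nat.card_congr (sfEquiv n), Nat.card_sum]

/-! ### counting: few-part partitions are rare -/

noncomputable def idxFun {n m : ℕ} (P : Finpartition (univ : Finset (Fin n)))
    (h : P.parts.card ≤ m) : Fin n → Fin m :=
  fun x => Fin.castLE h (P.parts.equivFin ⟨P.part x, P.part_mem.mpr (mem_univ x)⟩)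

lemma idxFun_eq_iff {n m : ℕ} (P : Finpartition (univ : Finset (Fin n)))
    (h : P.parts.card ≤ m) (a b : Fin n) :
    idxFun P h a = idxFun P h b ↔ P.part a = P.part b := by
  unfold idxFun
  constructor
  · intro hh
    have h1 := Fin.castLE_injective h hh
    have h2 := P.parts.equivFin.injective h1
    exact congrArg Subtype.val h2
  · intro hh
    have : (⟨P.part a, P.part_mem.mpr (mem_univ a)⟩ : {x // x ∈ P.parts}) =
        ⟨P.part b, P.part_mem.mpr (mem_univ b)⟩ := Subtype.ext hh
    rw [this]

lemma card_small_parts_le (n m : ℕ) :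
    Nat.card {P : SFsub n // ¬ m ≤ P.1.parts.card} ≤ m ^ n := by
  classical
  have hm : ∀ P : {P : SFsub n // ¬ m ≤ P.1.parts.card},
      P.1.1.parts.card ≤ m := fun P => (Nat.lt_of_not_le P.2).le
  have hinj : Function.Injective
      (fun P : {P : SFsub n // ¬ m ≤ P.1.parts.card} => idxFun P.1.1 (hm P)) := by
    intro P P' h
    refine Subtype.ext (Subtype.ext (part_ext_of_ker fun a b => ?_))
    have h' : idxFun P.1.1 (hm P) = idxFun P'.1.1 (hm P') := h
    rw [← idxFun_eq_iff P.1.1 (hm P) b a, ← idxFun_eq_iff P'.1.1 (hm P') b a, h']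
  calc Nat.card {P : SFsub n // ¬ m ≤ P.1.parts.card}
      ≤ Nat.card (Fin n → Fin m) := Nat.card_le_card_of_injective _ hinj
    _ = m ^ n := by rw [Nat.card_eq_fintype_card, Fintype.card_fun,
        Fintype.card_fin, Fintype.card_fin]

/-! ### injection from partitions with many parts -/

noncomputable def blk {n m : ℕ} (P : {P : SFsub n // m ≤ P.1.parts.card})
    (j : Fin m) : {x // x ∈ P.1.1.parts} :=
  P.1.1.parts.equivFin.symm (Fin.castLE P.2 j)

noncomputable def xpt {n m : ℕ} (P : {P : SFsub n // m ≤ P.1.parts.card})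
    (j : Fin m) : Fin n :=
  (blk P j).1.min' (P.1.1.nonempty_of_mem_parts (blk P j).2)

lemma part_xpt {n m : ℕ} (P : {P : SFsub n // m ≤ P.1.parts.card}) (j : Fin m) :
    P.1.1.part (xpt P j) = (blk P j).1 :=
  P.1.1.part_eq_of_mem (blk P j).2 (Finset.min'_mem _ _)

noncomputable def insIdx {n m : ℕ}
    (pj : {P : SFsub n // m ≤ P.1.parts.card} × Fin m) : SFsub (n + 1) :=
  ⟨ins pj.1.1.1 (xpt pj.1 pj.2), ins_sf pj.1.1.2⟩

lemma insIdx_inj {n m : ℕ} : Function.Injective (@insIdx n m) := by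
  rintro ⟨P, j⟩ ⟨P', j'⟩ h
  have hval : ins P.1.1 (xpt P j) = ins P'.1.1 (xpt P' j') := congrArg Subtype.val h
  obtain ⟨hPP, hpart⟩ := ins_inj hval
  have hP : P = P' := Subtype.ext (Subtype.ext hPP)
  subst hP
  rw [part_xpt, part_xpt] at hpart
  have hb : blk P j = blk P j' := Subtype.ext hpart
  have hj : Fin.castLE P.2 j = Fin.castLE P.2 j' :=
    P.1.1.parts.equivFin.symm.injective hb
  have : j = j' := Fin.castLE_injective P.2 hj
  rw [this]

lemma many_parts_mul_le (n m : ℕ) :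
    Nat.card {P : SFsub n // m ≤ P.1.parts.card} * m ≤ Nat.card (SFsub (n + 1)) := by
  calc Nat.card {P : SFsub n // m ≤ P.1.parts.card} * m
      = Nat.card ({P : SFsub n // m ≤ P.1.parts.card} × Fin m) := by
        rw [Nat.card_prod, Nat.card_eq_fintype_card (α := Fin m), Fintype.card_fin]
    _ ≤ Nat.card (SFsub (n + 1)) := Nat.card_le_card_of_injective _ insIdx_inj

lemma card_split (n m : ℕ) :
    Nat.card (SFsub n) ≤ Nat.card {P : SFsub n // m ≤ P.1.parts.card} + m ^ n := by
  classical
  have : Nat.card (SFsub n) = Nat.card {P : SFsub n // m ≤ P.1.parts.card} +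
      Nat.card {P : SFsub n // ¬ m ≤ P.1.parts.card} := by
    rw [← Nat.card_sum, Nat.card_congr (Equiv.sumCompl _)]
  rw [this]
  exact Nat.add_le_add_left (card_small_parts_le n m) _

lemma key_ineq (n m : ℕ) :
    (Nat.card (SFsub n) - m ^ n) * m ≤ Nat.card (SFsub (n + 1)) := by
  have h1 := many_parts_mul_le n m
  have h2 := card_split n m
  have h3 : Nat.card (SFsub n) - m ^ n ≤
      Nat.card {P : SFsub n // m ≤ P.1.parts.card} := by omega
  exact le_trans (Nat.mul_le_mul_right m h3) h1

/-! ### lower bound via perfect matchings -/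

def qmatch {n k : ℕ} (hk : 0 < k) (hn : 2 * k ≤ n) (σ : Equiv.Perm (Fin k)) :
    Fin n → Fin k := fun x =>
  if h : (x : ℕ) < k then ⟨x, h⟩
  else if h2 : (x : ℕ) < 2 * k then σ.symm ⟨(x : ℕ) - k, by omega⟩
  else ⟨0, hk⟩

lemma qmatch_fst {n k : ℕ} (hk : 0 < k) (hn : 2 * k ≤ n) (σ : Equiv.Perm (Fin k))
    (i : Fin k) : qmatch hk hn σ ⟨(i : ℕ), by omega⟩ = i := by
  have hv : ((⟨(i : ℕ), by omega⟩ : Fin n) : ℕ) = (i : ℕ) := rfl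
  simp only [qmatch, hv]
  rw [dif_pos i.isLt]

lemma qmatch_snd {n k : ℕ} (hk : 0 < k) (hn : 2 * k ≤ n) (σ : Equiv.Perm (Fin k))
    (i : Fin k) : qmatch hk hn σ ⟨k + (σ i : ℕ), by omega⟩ = i := by
  have hσ : (σ i : ℕ) < k := (σ i).isLt
  have hv : ((⟨k + (σ i : ℕ), by omega⟩ : Fin n) : ℕ) = k + (σ i : ℕ) := rfl
  simp only [qmatch, hv]
  rw [dif_neg (by omega), dif_pos (by omega)]
  have he : (⟨k + (σ i : ℕ) - k, by omega⟩ : Fin k) = σ i := by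
    apply Fin.ext
    show k + (σ i : ℕ) - k = (σ i : ℕ)
    omega
  rw [he, Equiv.symm_apply_apply]

noncomputable def pmatch {n k : ℕ} (hk : 0 < k) (hn : 2 * k ≤ n)
    (σ : Equiv.Perm (Fin k)) : Finpartition (univ : Finset (Fin n)) :=
  kpart (qmatch hk hn σ)

lemma pmatch_sf {n k : ℕ} (hk : 0 < k) (hn : 2 * k ≤ n) (σ : Equiv.Perm (Fin k)) :
    ∀ b ∈ (pmatch hk hn σ).parts, 2 ≤ b.card := by
  intro t ht
  obtain ⟨x, rfl⟩ := exists_part_eq ht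
  set i := qmatch hk hn σ x with hi
  have hu : (⟨(i : ℕ), by omega⟩ : Fin n) ∈ (pmatch hk hn σ).part x := by
    rw [pmatch, mem_part_kpart, qmatch_fst]
  have hv : (⟨k + (σ i : ℕ), by omega⟩ : Fin n) ∈ (pmatch hk hn σ).part x := by
    rw [pmatch, mem_part_kpart, qmatch_snd]
  refine Finset.one_lt_card.mpr ⟨_, hu, _, hv, ?_⟩
  intro hc
  have hval : (i : ℕ) = k + (σ i : ℕ) := congrArg Fin.val hc
  have hσ : (σ i : ℕ) < k := (σ i).isLt
  have hik : (i : ℕ) < k := i.isLt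
  omega

lemma pmatch_inj {n k : ℕ} (hk : 0 < k) (hn : 2 * k ≤ n) :
    Function.Injective (fun σ : Equiv.Perm (Fin k) => pmatch hk hn σ) := by
  intro σ τ h
  apply Equiv.ext
  intro i
  have hσ : (σ i : ℕ) < k := (σ i).isLt
  have hrel := (kpart_rel_iff (q := qmatch hk hn σ) (q' := qmatch hk hn τ) h
    (a := ⟨(i : ℕ), by omega⟩) (b := ⟨k + (σ i : ℕ), by omega⟩)).mp
    (by rw [qmatch_fst, qmatch_snd])
  rw [qmatch_fst] at hrel
  have hv : ((⟨k + (σ i : ℕ), by omega⟩ : Fin n) : ℕ) = k + (σ i : ℕ) := rfl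
  simp only [qmatch, hv] at hrel
  rw [dif_neg (by omega), dif_pos (by omega)] at hrel
  have he : (⟨k + (σ i : ℕ) - k, by omega⟩ : Fin k) = σ i := by
    apply Fin.ext
    show k + (σ i : ℕ) - k = (σ i : ℕ)
    omega
  rw [he] at hrel
  have h2 := congrArg τ hrel
  rw [Equiv.apply_symm_apply] at h2
  exact h2

lemma factorial_le_card (n : ℕ) (h2 : 2 ≤ n) :
    Nat.factorial (n / 2) ≤ Nat.card (SFsub n) := by
  have hk : 0 < n / 2 := by omega
  have hn : 2 * (n / 2) ≤ n := by omega
  have hinj : Function.Injective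
      (fun σ : Equiv.Perm (Fin (n / 2)) =>
        (⟨pmatch hk hn σ, pmatch_sf hk hn σ⟩ : SFsub n)) := by
    intro σ τ h
    exact pmatch_inj hk hn (congrArg Subtype.val h)
  calc Nat.factorial (n / 2) = Nat.card (Equiv.Perm (Fin (n / 2))) := by
        rw [Nat.card_eq_fintype_card, Fintype.card_perm, Fintype.card_fin]
    _ ≤ Nat.card (SFsub n) := Nat.card_le_card_of_injective _ hinj

end PartTool

lemma partDtot_eq_s6 (n : ℕ) : partDtot n = Nat.card (PartTool.SFsub n) := rfl

lemma bell_eq (n : ℕ) : bell n = partDtot n + partDtot (n + 1) :=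
  PartTool.bell_identity n

lemma hkey (n m : ℕ) : (partDtot n - m ^ n) * m ≤ partDtot (n + 1) :=
  PartTool.key_ineq n m

lemma hfac (n : ℕ) (h : 2 ≤ n) : Nat.factorial (n / 2) ≤ partDtot n :=
  PartTool.factorial_le_card n h

lemma hpos (n : ℕ) (h : 2 ≤ n) : 0 < partDtot n :=
  lt_of_lt_of_le (Nat.factorial_pos _) (hfac n h)

open Filter in
lemma main1 : Tendsto (fun n => (partDtot (n + 1) : ℝ) / partDtot n)
    atTop atTop := by
  rw [Filter.tendsto_atTop]
  intro M
  set m : ℕ := max 2 (2 * ⌈M⌉₊) with hm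
  have hm2 : 2 ≤ m := le_max_left _ _
  have hm1R : (1:ℝ) ≤ (m:ℝ) := by
    have : (1:ℕ) ≤ m := by omega
    exact_mod_cast this
  have hmM : 2 * M ≤ (m:ℝ) := by
    have h1 : 2 * ⌈M⌉₊ ≤ m := le_max_right _ _
    have h2 : M ≤ (⌈M⌉₊ : ℝ) := Nat.le_ceil M
    have h3 : (2 * ⌈M⌉₊ : ℕ) ≤ (m:ℕ) := h1
    have h4 : ((2 * ⌈M⌉₊ : ℕ) : ℝ) ≤ (m:ℝ) := by exact_mod_cast h3
    push_cast at h4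
    linarith
  have h0 : Tendsto (fun j : ℕ => ((m:ℝ)^2)^j / (Nat.factorial j) * m)
      atTop (nhds 0) := by
    simpa using (FloorSemiring.tendsto_pow_div_factorial_atTop ((m:ℝ)^2)).mul_const (m:ℝ)
  have hdiv : Tendsto (fun n : ℕ => n / 2) atTop atTop := by
    apply Filter.tendsto_atTop_atTop.mpr
    intro b
    exact ⟨2 * b, fun a ha => by omega⟩
  have h1 : Tendsto (fun n : ℕ => ((m:ℝ)^2)^(n/2) / (Nat.factorial (n/2)) * m)
      atTop (nhds 0) := h0.comp hdiv
  have hev := h1.eventually_lt_const (by norm_num : (0:ℝ) < 1/2)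
  filter_upwards [hev, Filter.eventually_ge_atTop 2] with n hsmall hn2
  have hDpos : (0:ℝ) < partDtot n := by exact_mod_cast hpos n hn2
  have hfacR : ((Nat.factorial (n/2) : ℝ)) ≤ (partDtot n : ℝ) := by
    exact_mod_cast hfac n hn2
  have hfpos : (0:ℝ) < Nat.factorial (n/2) := by
    exact_mod_cast Nat.factorial_pos (n/2)
  have hmn : (m:ℝ)^n ≤ ((m:ℝ)^2)^(n/2) * m := by
    rw [← pow_mul, ← pow_succ]
    exact pow_le_pow_right₀ hm1R (by omega)
  have hsmall2 : ((m:ℝ)^2)^(n/2) * (m:ℝ) < 1/2 * Nat.factorial (n/2) := by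
    rw [div_mul_eq_mul_div, div_lt_iff₀ hfpos] at hsmall
    linarith
  have h2m : 2 * (m:ℝ)^n ≤ (partDtot n : ℝ) := by nlinarith
  have hmn_nat : m ^ n ≤ partDtot n := by
    have hc : ((m ^ n : ℕ) : ℝ) ≤ ((partDtot n : ℕ) : ℝ) := by push_cast; nlinarith
    exact_mod_cast hc
  have hkeyR : ((partDtot n : ℝ) - (m:ℝ)^n) * (m:ℝ) ≤ (partDtot (n+1) : ℝ) := by
    have hc : (((partDtot n - m ^ n) * m : ℕ) : ℝ) ≤ ((partDtot (n+1) : ℕ) : ℝ) := by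
      exact_mod_cast hkey n m
    rw [Nat.cast_mul, Nat.cast_sub hmn_nat] at hc
    push_cast at hc ⊢
    exact hc
  rw [le_div_iff₀ hDpos]
  have e1 : (partDtot n : ℝ) / 2 ≤ (partDtot n : ℝ) - (m:ℝ)^n := by linarith
  calc M * (partDtot n : ℝ) = (partDtot n : ℝ) / 2 * (2 * M) := by ring
    _ ≤ (partDtot n : ℝ) / 2 * (m:ℝ) := by
        apply mul_le_mul_of_nonneg_left hmM
        positivity
    _ ≤ ((partDtot n : ℝ) - (m:ℝ)^n) * (m:ℝ) := by
        apply mul_le_mul_of_nonneg_right e1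
        positivity
    _ ≤ (partDtot (n+1) : ℝ) := hkeyR

open Filter

theorem partDtot_ratio_tendsto :
    Filter.Tendsto (fun n => (partDtot (n + 1) : ℝ) / partDtot n)
        Filter.atTop Filter.atTop ∧
    Filter.Tendsto (fun n => (partDtot (n + 1) : ℝ) / bell n)
        Filter.atTop (nhds 1) := by
  refine ⟨main1, ?_⟩
  have hinv : Tendsto (fun n => (partDtot n : ℝ) / partDtot (n+1)) atTop (nhds 0) := by
    have h := main1.inv_tendsto_atTop
    refine h.congr fun n => ?_
    simp [Pi.inv_apply, inv_div]
  have hlim : Tendsto (fun n => 1 / ((partDtot n : ℝ) / partDtot (n+1) + 1))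
      atTop (nhds 1) := by
    have hadd : Tendsto (fun n => (partDtot n : ℝ) / partDtot (n+1) + 1)
        atTop (nhds ((0:ℝ) + 1)) := hinv.add tendsto_const_nhds
    have h := Filter.Tendsto.div (tendsto_const_nhds (x := (1:ℝ))) hadd (by norm_num)
    norm_num at h
    exact h
  refine hlim.congr' ?_
  filter_upwards [Filter.eventually_ge_atTop 2] with n hn2
  have h1pos : (0:ℝ) < partDtot (n+1) := by
    exact_mod_cast hpos (n+1) (by omega)
  rw [div_add_one h1pos.ne', one_div, inv_div, bell_eq n]
  push_cast
  ring
end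

section
/- For every prime p and every integer k with 1 < k < p, p divides D(p,k). -/
open Finset MulAction

variable {p : ℕ} [NeZero p]

def shiftIso (i : Fin p) : Finset (Fin p) ≃o Finset (Fin p) where
  toEquiv := (Equiv.addLeft i).finsetCongr
  map_rel_iff' := by
    intro s t
    simp [Equiv.finsetCongr, Finset.map_subset_map]

lemma shiftIso_apply (i : Fin p) (s : Finset (Fin p)) :
    shiftIso i s = s.image (fun x => i + x) := by
  simp [shiftIso, Equiv.finsetCongr, Finset.map_eq_image]

def shiftPart (i : Fin p) (P : Finpartition (Finset.univ : Finset (Fin p))) :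
    Finpartition (Finset.univ : Finset (Fin p)) :=
  (P.map (shiftIso i)).copy (by
    rw [shiftIso_apply]
    exact Finset.image_univ_of_surjective (fun x => ⟨x - i, by simp⟩))

lemma mem_shiftPart_parts {i : Fin p} {P : Finpartition (Finset.univ : Finset (Fin p))}
    {b : Finset (Fin p)} :
    b ∈ (shiftPart i P).parts ↔ ∃ c ∈ P.parts, c.image (fun x => i + x) = b := by
  simp only [shiftPart, Finpartition.copy_parts, Finpartition.parts_map, Finset.mem_map]
  constructor
  · rintro ⟨c, hc, rfl⟩
    exact ⟨c, hc, by rw [← shiftIso_apply]; rfl⟩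
  · rintro ⟨c, hc, rfl⟩
    exact ⟨c, hc, by rw [← shiftIso_apply]; rfl⟩

lemma shiftPart_parts_card (i : Fin p) (P : Finpartition (Finset.univ : Finset (Fin p))) :
    (shiftPart i P).parts.card = P.parts.card := by
  simp [shiftPart, Finpartition.copy_parts, Finpartition.parts_map]

lemma shiftPart_zero (P : Finpartition (Finset.univ : Finset (Fin p))) :
    shiftPart 0 P = P := by
  ext b
  rw [mem_shiftPart_parts]
  constructor
  · rintro ⟨c, hc, rfl⟩; simpa using hc
  · intro hb; exact ⟨b, hb, by simp⟩

lemma shiftPart_add (i j : Fin p) (P : Finpartition (Finset.univ : Finset (Fin p))) :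
    shiftPart (i + j) P = shiftPart i (shiftPart j P) := by
  ext b
  rw [mem_shiftPart_parts, mem_shiftPart_parts]
  constructor
  · rintro ⟨c, hc, rfl⟩
    refine ⟨c.image (fun x => j + x), mem_shiftPart_parts.2 ⟨c, hc, rfl⟩, ?_⟩
    rw [Finset.image_image]
    congr 1
    ext x
    simp [add_assoc]
  · rintro ⟨c, hc, rfl⟩
    rw [mem_shiftPart_parts] at hc
    obtain ⟨d, hd, rfl⟩ := hc
    refine ⟨d, hd, ?_⟩
    rw [Finset.image_image]
    congr 1
    ext x
    simp [add_assoc]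

-- key lemma: if a nonempty b is fixed by translation by d ≠ 0, then b = univ (p prime)
lemma fixed_block_univ (hp : p.Prime) {d : Fin p} (hd : d ≠ 0)
    {b : Finset (Fin p)} (hne : b.Nonempty)
    (hfix : b.image (fun x => d + x) = b) : b = Finset.univ := by
  obtain ⟨y, hy⟩ := hne
  have hstep : ∀ z ∈ b, d + z ∈ b := by
    intro z hz
    rw [← hfix]
    exact Finset.mem_image_of_mem _ hz
  have hnat : ∀ n : ℕ, n • d + y ∈ b := by
    intro n
    induction n with
    | zero => simpa using hy
    | succ n ih => rw [succ_nsmul, add_comm (n • d) d, add_assoc]; exact hstep _ ih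
  -- d generates the whole group
  have hcard : Fintype.card (Fin p) = p := Fintype.card_fin p
  have horder : addOrderOf d = p := by
    have h1 : addOrderOf d ∣ p := by
      have := addOrderOf_dvd_card (x := d); rwa [hcard] at this
    rcases (Nat.Prime.eq_one_or_self_of_dvd hp _ h1) with h | h
    · exact absurd (AddMonoid.addOrderOf_eq_one_iff.1 h) hd
    · exact h
  apply Finset.eq_univ_of_forall
  intro x
  -- x - y ∈ zmultiples d = ⊤
  have htop : AddSubgroup.zmultiples d = ⊤ := by
    apply AddSubgroup.eq_top_of_card_eq
    rw [Nat.card_zmultiples, horder, Nat.card_eq_fintype_card, hcard]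
  have hmem : x - y ∈ AddSubgroup.zmultiples d := htop ▸ AddSubgroup.mem_top _
  obtain ⟨k, hk⟩ := AddSubgroup.mem_zmultiples_iff.1 hmem
  -- reduce k modulo p
  have hpd : (p : ℤ) • d = 0 := by
    have : p • d = 0 := by
      have := card_nsmul_eq_zero (x := d); rwa [hcard] at this
    exact_mod_cast this
  set m : ℕ := (k % (p : ℤ)).toNat with hm
  have hmk : (m : ℤ) • d = k • d := by
    have hmz : (m : ℤ) = k % (p : ℤ) := Int.toNat_of_nonneg
      (Int.emod_nonneg k (by exact_mod_cast hp.ne_zero))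
    rw [hmz]
    conv_rhs => rw [← Int.emod_add_mul_ediv k (p : ℤ)]
    rw [add_zsmul, mul_comm, mul_zsmul, hpd, smul_zero, add_zero]
  have : (m : ℕ) • d = x - y := by
    have := hmk.trans hk
    exact_mod_cast this
  have hb := hnat m
  rw [this] at hb
  simpa using hb

noncomputable instance partMulAction (p k : ℕ) [NeZero p] :
    MulAction (Multiplicative (Fin p))
      {P : Finpartition (Finset.univ : Finset (Fin p)) //
        P.parts.card = k ∧ ∀ b ∈ P.parts, 2 ≤ b.card} where
  smul g P := ⟨shiftPart g.toAdd P.1, by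
    refine ⟨by rw [shiftPart_parts_card]; exact P.2.1, ?_⟩
    intro b hb
    rw [mem_shiftPart_parts] at hb
    obtain ⟨c, hc, rfl⟩ := hb
    rw [Finset.card_image_of_injective _ (add_right_injective _)]
    exact P.2.2 c hc⟩
  one_smul P := Subtype.ext (shiftPart_zero P.1)
  mul_smul g h P := Subtype.ext (shiftPart_add _ _ _)

theorem prime_dvd_partD' (p k : ℕ) (hp : p.Prime) (hk1 : 1 < k) (hkp : k < p) :
    p ∣ Nat.card {P : Finpartition (Finset.univ : Finset (Fin p)) //
    P.parts.card = k ∧ ∀ b ∈ P.parts, 2 ≤ b.card} := by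
  haveI : NeZero p := ⟨hp.pos.ne'⟩
  set X := {P : Finpartition (Finset.univ : Finset (Fin p)) //
    P.parts.card = k ∧ ∀ b ∈ P.parts, 2 ≤ b.card} with hX
  have hpg : IsPGroup p (Multiplicative (Fin p)) := by
    apply IsPGroup.of_card (n := 1)
    simp
  have hempty : IsEmpty (fixedPoints (Multiplicative (Fin p)) X) := by
    rw [isEmpty_iff]
    rintro ⟨⟨P, hcard, hbs⟩, hfix⟩
    simp only [mem_fixedPoints] at hfix
    -- a part b
    have hne : P.parts.Nonempty := Finset.card_pos.1 (by omega)
    obtain ⟨b, hb⟩ := hne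
    -- all translates of b are parts
    have htrans : ∀ i : Fin p, b.image (fun x => i + x) ∈ P.parts := by
      intro i
      have := hfix (Multiplicative.ofAdd i)
      have hP : shiftPart i P = P := congrArg Subtype.val this
      rw [← hP]
      exact mem_shiftPart_parts.2 ⟨b, hb, rfl⟩
    by_cases hinj : Function.Injective (fun i : Fin p => b.image (fun x => i + x))
    · -- at least p parts, contradiction with k < p
      have hle : p ≤ P.parts.card := by
        have := Finset.card_le_card_of_injOn (s := (Finset.univ : Finset (Fin p)))
          (fun i : Fin p => b.image (fun x => i + x))
          (fun i _ => htrans i) (hinj.injOn)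
        simpa using this
      omega
    · -- some d ≠ 0 fixes b, so b = univ
      rw [Function.not_injective_iff] at hinj
      obtain ⟨i, j, hij, hne⟩ := hinj
      have hd : b.image (fun x => (i - j) + x) = b := by
        have := congrArg (Finset.image (fun x => (-j) + x)) hij
        rw [Finset.image_image, Finset.image_image] at this
        simpa [Function.comp, ← add_assoc, sub_eq_neg_add] using this
      have hbne : b.Nonempty := Finset.card_pos.1 (by have := hbs b hb; omega)
      have hbuniv : b = Finset.univ := fixed_block_univ hp (sub_ne_zero.2 hne) hbne hd
      -- another part must be disjoint from univ: contradiction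
      obtain ⟨c, hc, hcb⟩ := Finset.exists_mem_ne (by omega : 1 < P.parts.card) b
      have hdisj : Disjoint c b := P.disjoint hc hb hcb
      have hcne : c.Nonempty := Finset.card_pos.1 (by have := hbs c hc; omega)
      obtain ⟨x, hx⟩ := hcne
      exact (Finset.disjoint_left.1 hdisj hx) (hbuniv ▸ Finset.mem_univ x)
  haveI : Fact p.Prime := ⟨hp⟩
  haveI := hempty
  have hmod := hpg.card_modEq_card_fixedPoints X
  have h0 : Nat.card (fixedPoints (Multiplicative (Fin p)) X) = 0 := Nat.card_of_isEmpty
  rw [h0] at hmod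
  exact Nat.modEq_zero_iff_dvd.1 hmod


theorem prime_dvd_partD (p k : ℕ) (hp : p.Prime) (hk1 : 1 < k) (hkp : k < p) :
    p ∣ partD p k := by
  exact prime_dvd_partD' p k hp hk1 hkp
end

section
/- For every prime p (including p = 2), D(p) ≡ 1 (mod p), where D(p) is the number of partitions of {1,...,p} with no singleton blocks. -/
open Finset

section pmap
variable {α β γ : Type*} [DecidableEq α] [DecidableEq β] [DecidableEq γ]
  [Fintype α] [Fintype β] [Fintype γ]

/-- `Finset α ≃o Finset β` from `α ≃ β`. -/
def finsetIso (e : α ≃ β) : Finset α ≃o Finset β where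
  toEquiv := e.finsetCongr
  map_rel_iff' := by
    intro s t
    simp [Equiv.finsetCongr_apply, Finset.map_subset_map]

noncomputable def pmap (e : α ≃ β) (P : Finpartition (univ : Finset α)) :
    Finpartition (univ : Finset β) :=
  (P.map (finsetIso e)).copy (by
    simp [finsetIso, Equiv.finsetCongr_apply, Finset.map_univ_equiv])

lemma pmap_parts (e : α ≃ β) (P : Finpartition (univ : Finset α)) :
    (pmap e P).parts = P.parts.image (fun s => s.image e) := by
  classical
  simp only [pmap, Finpartition.copy_parts, Finpartition.parts_map]
  ext b
  simp [Finset.mem_map, finsetIso, Equiv.finsetCongr_apply, Finset.map_eq_image]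

lemma pmap_refl (P : Finpartition (univ : Finset α)) : pmap (Equiv.refl α) P = P := by
  ext b
  simp [pmap_parts]

lemma pmap_trans (e : α ≃ β) (e' : β ≃ γ) (P : Finpartition (univ : Finset α)) :
    pmap e' (pmap e P) = pmap (e.trans e') P := by
  ext b
  simp only [pmap_parts, Finset.mem_image, Equiv.trans_apply]
  constructor
  · rintro ⟨s, ⟨t, ht, rfl⟩, rfl⟩
    exact ⟨t, ht, by rw [Finset.image_image]; rfl⟩
  · rintro ⟨t, ht, rfl⟩
    exact ⟨t.image e, ⟨t, ht, rfl⟩, by rw [Finset.image_image]; rfl⟩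

end pmap

section ND
variable {α β : Type*} [DecidableEq α] [DecidableEq β] [Fintype α] [Fintype β]

/-- partitions with no singleton (or empty) blocks -/
def ND (α : Type*) [DecidableEq α] [Fintype α] : Type _ :=
  {P : Finpartition (univ : Finset α) // ∀ b ∈ P.parts, 2 ≤ b.card}

lemma pmap_card (e : α ≃ β) (P : Finpartition (univ : Finset α))
    (hP : ∀ b ∈ P.parts, 2 ≤ b.card) : ∀ b ∈ (pmap e P).parts, 2 ≤ b.card := by
  intro b hb
  rw [pmap_parts] at hb
  obtain ⟨a, ha, rfl⟩ := Finset.mem_image.mp hb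
  rw [Finset.card_image_of_injective _ e.injective]
  exact hP a ha

noncomputable def NDmap (e : α ≃ β) (P : ND α) : ND β :=
  ⟨pmap e P.1, pmap_card e P.1 P.2⟩

noncomputable def NDequiv (e : α ≃ β) : ND α ≃ ND β where
  toFun := NDmap e
  invFun := NDmap e.symm
  left_inv P := Subtype.ext (by
    show pmap e.symm (pmap e P.1) = P.1
    rw [pmap_trans, Equiv.self_trans_symm, pmap_refl])
  right_inv P := Subtype.ext (by
    show pmap e (pmap e.symm P.1) = P.1
    rw [pmap_trans, Equiv.symm_trans_self, pmap_refl])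

end ND

section action
variable (p : ℕ) [Fact p.Prime]

instance ND.finite : Finite (ND (ZMod p)) := by unfold ND; infer_instance

noncomputable instance : SMul (Multiplicative (ZMod p)) (ND (ZMod p)) :=
  ⟨fun g P => NDmap (Equiv.addLeft g.toAdd) P⟩

lemma smul_def (g : Multiplicative (ZMod p)) (P : ND (ZMod p)) :
    g • P = NDmap (Equiv.addLeft g.toAdd) P := rfl

lemma addLeft_eq (g h : ZMod p) :
    (Equiv.addLeft h).trans (Equiv.addLeft g) = Equiv.addLeft (g + h) := by
  ext x
  simp [add_assoc]

noncomputable instance NDaction : MulAction (Multiplicative (ZMod p)) (ND (ZMod p)) where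
  one_smul P := by
    rw [smul_def]
    apply Subtype.ext
    show pmap (Equiv.addLeft (0 : ZMod p)) P.1 = P.1
    have h : Equiv.addLeft (0 : ZMod p) = Equiv.refl _ := by ext x; simp
    rw [h, pmap_refl]
  mul_smul g h P := by
    rw [smul_def, smul_def, smul_def]
    apply Subtype.ext
    show pmap (Equiv.addLeft (g.toAdd + h.toAdd)) P.1
      = pmap (Equiv.addLeft g.toAdd) (pmap (Equiv.addLeft h.toAdd) P.1)
    rw [pmap_trans, addLeft_eq]

lemma pgroup : IsPGroup p (Multiplicative (ZMod p)) := by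
  apply IsPGroup.of_card
  have : Nat.card (Multiplicative (ZMod p)) = Nat.card (ZMod p) :=
    Nat.card_congr Multiplicative.toAdd
  rw [this, Nat.card_eq_fintype_card, ZMod.card, pow_one]

/-- the one-block partition -/
noncomputable def Pone : ND (ZMod p) :=
  ⟨Finpartition.indiscrete (by
      exact (Finset.univ_nonempty (α := ZMod p)).ne_empty), by
    intro b hb
    have hb' : b = Finset.univ := by
      simpa [Finpartition.indiscrete] using hb
    subst hb'
    rw [Finset.card_univ, ZMod.card]
    exact (Fact.out : p.Prime).two_le⟩

lemma Pone_parts : (Pone p).1.parts = {Finset.univ} := rfl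

end action

section fixed
variable (p : ℕ) [Fact p.Prime]

lemma image_addLeft_mem (P : ND (ZMod p))
    (hP : ∀ g : ZMod p, pmap (Equiv.addLeft g) P.1 = P.1)
    {b : Finset (ZMod p)} (hb : b ∈ P.1.parts) (g : ZMod p) :
    b.image (fun x => g + x) ∈ P.1.parts := by
  have : b.image (fun x => g + x) ∈ (pmap (Equiv.addLeft g) P.1).parts := by
    rw [pmap_parts]
    exact Finset.mem_image.mpr ⟨b, hb, rfl⟩
  rwa [hP g] at this

lemma fixed_unique (P : ND (ZMod p))
    (hP : ∀ g : ZMod p, pmap (Equiv.addLeft g) P.1 = P.1) : P = Pone p := by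
  obtain ⟨b, hb, h0⟩ := P.1.exists_mem (Finset.mem_univ (0 : ZMod p))
  by_cases hfull : ∃ g : ZMod p, g ≠ 0 ∧ b.image (fun x => g + x) = b
  · -- invariant block through 0 : it must be everything
    obtain ⟨g, hg, hbg⟩ := hfull
    have hmul : ∀ n : ℕ, b.image (fun x => (n • g : ZMod p) + x) = b := by
      intro n
      induction n with
      | zero => simp
      | succ n ih =>
        have h1 : b.image (fun x => ((n + 1) • g : ZMod p) + x)
            = (b.image (fun x => (n • g : ZMod p) + x)).image (fun x => g + x) := by
          rw [Finset.image_image]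
          congr 1
          funext x
          show ((n + 1) • g : ZMod p) + x = g + ((n • g : ZMod p) + x)
          rw [succ_nsmul]
          ring
        rw [h1, ih, hbg]
    have hall : ∀ c : ZMod p, ∃ n : ℕ, (n • g : ZMod p) = c := by
      intro c
      refine ⟨(c * g⁻¹).val, ?_⟩
      rw [nsmul_eq_mul, ZMod.natCast_val, ZMod.cast_id]
      field_simp
    have hbuniv : b = Finset.univ := by
      apply Finset.eq_univ_of_forall
      intro c
      obtain ⟨n, hn⟩ := hall c
      rw [← hmul n]
      exact Finset.mem_image.mpr ⟨0, h0, by rw [add_zero, hn]⟩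
    apply Subtype.ext
    ext t
    rw [Pone_parts, Finset.mem_singleton]
    constructor
    · intro ht
      obtain ⟨x, hx⟩ := P.1.nonempty_of_mem_parts ht
      exact P.1.eq_of_mem_parts ht (hbuniv ▸ hb) hx (Finset.mem_univ x)
    · rintro rfl
      exact hbuniv ▸ hb
  · -- else the orbit of the block has p disjoint blocks of size ≥ 2 : contradiction
    exfalso
    push_neg at hfull
    set f : ZMod p → Finset (ZMod p) := fun g => b.image (fun x => g + x) with hf
    have hinj : Function.Injective f := by
      intro g₁ g₂ hgg
      by_contra hne
      apply hfull (g₁ - g₂) (sub_ne_zero.mpr hne)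
      calc b.image (fun x => (g₁ - g₂) + x)
          = (b.image (fun x => g₁ + x)).image (fun x => -g₂ + x) := by
            rw [Finset.image_image]
            congr 1
            funext x
            show (g₁ - g₂) + x = -g₂ + (g₁ + x)
            ring
        _ = (b.image (fun x => g₂ + x)).image (fun x => -g₂ + x) := by
            rw [show b.image (fun x => g₁ + x) = b.image (fun x => g₂ + x) from hgg]
        _ = b := by
            rw [Finset.image_image]
            have : ((fun x => -g₂ + x) ∘ fun x => g₂ + x) = id := by
              funext x; simp
            rw [this, Finset.image_id]
    have hsub : (Finset.univ : Finset (ZMod p)).image f ⊆ P.1.parts := by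
      intro t ht
      obtain ⟨g, _, rfl⟩ := Finset.mem_image.mp ht
      exact image_addLeft_mem p P hP hb g
    have hcard : ∀ t ∈ (Finset.univ : Finset (ZMod p)).image f, 2 ≤ t.card := by
      intro t ht
      exact P.2 t (hsub ht)
    have h2p : 2 * p ≤ ∑ t ∈ (Finset.univ : Finset (ZMod p)).image f, t.card := by
      have := Finset.card_nsmul_le_sum ((Finset.univ : Finset (ZMod p)).image f)
        (fun t => t.card) 2 hcard
      rwa [Finset.card_image_of_injective _ hinj, Finset.card_univ, ZMod.card,
        smul_eq_mul, mul_comm] at this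
    have hle : ∑ t ∈ (Finset.univ : Finset (ZMod p)).image f, t.card
        ≤ ∑ t ∈ P.1.parts, t.card :=
      Finset.sum_le_sum_of_subset hsub
    rw [P.1.sum_card_parts, Finset.card_univ, ZMod.card] at hle
    have hp2 := (Fact.out : p.Prime).two_le
    omega

end fixed

section final
variable (p : ℕ) [Fact p.Prime]

lemma fixedPoints_eq :
    MulAction.fixedPoints (Multiplicative (ZMod p)) (ND (ZMod p)) = {Pone p} := by
  ext P
  rw [MulAction.mem_fixedPoints, Set.mem_singleton_iff]
  constructor
  · intro h
    apply fixed_unique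
    intro g
    have h1 := h (Multiplicative.ofAdd g)
    rw [smul_def] at h1
    exact congrArg Subtype.val h1
  · rintro rfl g
    rw [smul_def]
    apply Subtype.ext
    show pmap (Equiv.addLeft g.toAdd) (Pone p).1 = (Pone p).1
    ext t
    rw [pmap_parts, Pone_parts]
    have himg : (Finset.univ : Finset (ZMod p)).image (Equiv.addLeft g.toAdd) =
        Finset.univ := by
      apply Finset.eq_univ_of_forall
      intro c
      exact Finset.mem_image.mpr ⟨c - g.toAdd, Finset.mem_univ _, by simp⟩
    simp [himg]

end final

theorem partDtot_prime_mod (p : ℕ) (hp : p.Prime) : partDtot p ≡ 1 [MOD p] := by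
  haveI : Fact p.Prime := ⟨hp⟩
  have e : ZMod p ≃ Fin p := Fintype.equivFinOfCardEq (ZMod.card p)
  have h1 : partDtot p = Nat.card (ND (ZMod p)) := Nat.card_congr (NDequiv e.symm)
  have h2 := (pgroup p).card_modEq_card_fixedPoints (ND (ZMod p))
  have h3 : Nat.card
      (MulAction.fixedPoints (Multiplicative (ZMod p)) (ND (ZMod p))) = 1 := by
    rw [fixedPoints_eq]
    exact Nat.card_unique
  rw [h1]
  calc Nat.card (ND (ZMod p))
      ≡ Nat.card (MulAction.fixedPoints (Multiplicative (ZMod p)) (ND (ZMod p)))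
        [MOD p] := h2
    _ = 1 := h3
end
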